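/- arXiv:2405.13577 — 3 statements merged into one kernel-verified Lean document; each statement's English description precedes it below -/
import Mathlib

section
/- Let I be a fractional ideal of B with prime factorisation I = ∏_𝔭 𝔭^{n_𝔭}, and let (1/a_0, g_1(θ)/a_1, …, g_{d−1}(θ)/a_{d−1}) be a triangular basis of I. For each prime p ∈ A set m_p := max{ ⌈n_𝔭/e_𝔭⌉ : 𝔭 | p } (with m_p = 0 if n_𝔭 = 0 for all 𝔭 | p). Then v_p(a_0) = −m_p for every prime p of A, and the normalised ideal I* = a_0·I satisfies I* = ∏_{p} ∏_{𝔭|p} 𝔭^{n_𝔭 − e_𝔭·m_p}, the outer product running over the primes p of A. -/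
set_option maxHeartbeats 1000000

open Polynomial FractionalIdeal IsDedekindDomain IsDedekindDomain.HeightOneSpectrum


section AuxCount
variable {R : Type*} [CommRing R] [IsDedekindDomain R] (F : Type*) [Field F]
  [Algebra R F] [IsFractionRing R F]

lemma aux_mul_le_one {I J : FractionalIdeal (nonZeroDivisors R) F} (hI : I ≤ 1) (hJ : J ≤ 1) :
    I * J ≤ 1 := by
  calc I * J ≤ I * 1 := mul_right_mono hJ
    _ = I := mul_one I
    _ ≤ 1 := hI

lemma aux_le_one_of_count {I : FractionalIdeal (nonZeroDivisors R) F} (hI : I ≠ 0)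
    (h : ∀ v : HeightOneSpectrum R, 0 ≤ count F v I) : I ≤ 1 := by
  conv_lhs => rw [← finprod_heightOneSpectrum_factorization' (K := F) hI]
  refine finprod_induction (fun J => J ≤ 1) le_rfl (fun x y hx hy => aux_mul_le_one F hx hy)
    (fun v => ?_)
  have h0 : (0:ℤ) ≤ count F v I := h v
  rw [← Int.toNat_of_nonneg h0, zpow_natCast]
  induction (count F v I).toNat with
  | zero => simp
  | succ k ih =>
      rw [pow_succ]
      exact aux_mul_le_one F ih ((coeIdeal_le_coeIdeal F).mpr le_top)

lemma aux_le_of_count {I J : FractionalIdeal (nonZeroDivisors R) F} (hI : I ≠ 0) (hJ : J ≠ 0)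
    (h : ∀ v : HeightOneSpectrum R, count F v J ≤ count F v I) : I ≤ J := by
  have h1 : I * J⁻¹ ≤ 1 := by
    refine aux_le_one_of_count F (mul_ne_zero hI (inv_ne_zero hJ)) (fun v => ?_)
    rw [count_mul F v hI (inv_ne_zero hJ), count_inv]
    have := h v; omega
  calc I = I * J⁻¹ * J := by
        rw [mul_assoc, inv_mul_cancel₀ hJ, mul_one]
    _ ≤ 1 * J := mul_left_mono h1
    _ = J := one_mul J

lemma aux_eq_of_count {I J : FractionalIdeal (nonZeroDivisors R) F} (hI : I ≠ 0) (hJ : J ≠ 0)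
    (h : ∀ v : HeightOneSpectrum R, count F v I = count F v J) : I = J :=
  le_antisymm (aux_le_of_count F hI hJ (fun v => (h v).ge))
    (aux_le_of_count F hJ hI (fun v => (h v).le))

lemma aux_mem_iff_count {x : F} (hx : x ≠ 0) {I : FractionalIdeal (nonZeroDivisors R) F}
    (hI : I ≠ 0) : x ∈ I ↔ ∀ v : HeightOneSpectrum R,
      count F v I ≤ count F v (spanSingleton (nonZeroDivisors R) x) := by
  have hsp : spanSingleton (nonZeroDivisors R) x ≠ 0 := spanSingleton_ne_zero_iff.mpr hx
  constructor
  · intro hmem v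
    exact FractionalIdeal.count_mono (K := F) (v := v) hsp (spanSingleton_le_iff_mem.mpr hmem)
  · intro h
    exact spanSingleton_le_iff_mem.mp (aux_le_of_count F hsp hI h)

/-- spanSingleton commutes with zpow. -/
lemma aux_spanSingleton_zpow (x : F) (γ : ℤ) :
    spanSingleton (nonZeroDivisors R) x ^ γ = spanSingleton (nonZeroDivisors R) (x ^ γ) := by
  cases γ with
  | ofNat k =>
      rw [Int.ofNat_eq_coe, zpow_natCast, zpow_natCast, spanSingleton_pow]
  | negSucc k =>
      rw [zpow_negSucc, zpow_negSucc, spanSingleton_pow, spanSingleton_inv]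

end AuxCount

section AuxTwo
variable {A : Type*} [CommRing A] [IsDomain A] [IsPrincipalIdealRing A]
  {R : Type*} [CommRing R] [IsDedekindDomain R] [Algebra A R]
  (F : Type*) [Field F] [Algebra R F] [IsFractionRing R F]

/-- contraction of a prime of `R` containing `p` is exactly `(p)`. -/
lemma aux_mem_prime_iff_dvd (hinj : Function.Injective (algebraMap A R))
    {p : A} (hp : Prime p) (w : HeightOneSpectrum R)
    (hmem : algebraMap A R p ∈ w.asIdeal) (r : A) :
    algebraMap A R r ∈ w.asIdeal ↔ p ∣ r := by
  constructor
  · intro hr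
    have hprime : (Ideal.comap (algebraMap A R) w.asIdeal).IsPrime :=
      Ideal.IsPrime.comap _
    have hne : Ideal.comap (algebraMap A R) w.asIdeal ≠ ⊤ := hprime.ne_top
    have hmax : (Ideal.span {p}).IsMaximal :=
      PrincipalIdealRing.isMaximal_of_irreducible hp.irreducible
    have hle : Ideal.span {p} ≤ Ideal.comap (algebraMap A R) w.asIdeal := by
      rw [Ideal.span_le, Set.singleton_subset_iff]; exact hmem
    have heq : Ideal.span {p} = Ideal.comap (algebraMap A R) w.asIdeal :=
      (hmax.eq_of_le hne hle)
    rw [← Ideal.mem_span_singleton, heq]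
    exact hr
  · rintro ⟨s, rfl⟩
    rw [_root_.map_mul]
    exact Ideal.mul_mem_right _ _ hmem

lemma aux_span_map_ne_bot (hinj : Function.Injective (algebraMap A R)) {r : A} (hr : r ≠ 0) :
    Ideal.span {algebraMap A R r} ≠ (⊥ : Ideal R) := by
  rw [Ne, Ideal.span_singleton_eq_bot]
  intro h
  exact hr (hinj (by rw [h, _root_.map_zero]))

/-- count of the span of `algebraMap A R r` at a prime not containing it is zero -/
lemma aux_count_span_zero (hinj : Function.Injective (algebraMap A R))
    {r : A} (hr : r ≠ 0) (w : HeightOneSpectrum R)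
    (hmem : algebraMap A R r ∉ w.asIdeal) :
    count F w (Ideal.span {algebraMap A R r} : Ideal R) = 0 := by
  classical
  rw [count_coe F w (aux_span_map_ne_bot hinj hr)]
  norm_cast
  by_contra hne
  have hdvd : w.asIdeal ∣ Ideal.span {algebraMap A R r} :=
    (Associates.count_ne_zero_iff_dvd (aux_span_map_ne_bot hinj hr) w.irreducible).mp hne
  have hle : Ideal.span {algebraMap A R r} ≤ w.asIdeal := Ideal.le_of_dvd hdvd
  exact hmem (hle (Ideal.mem_span_singleton_self _))

/-- count of the span of the image of `p` at a prime over `p` is the ramification index. -/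
lemma aux_count_span_p (hinj : Function.Injective (algebraMap A R))
    {p : A} (hp : Prime p) (w : HeightOneSpectrum R)
    (hmem : algebraMap A R p ∈ w.asIdeal) :
    count F w (Ideal.span {algebraMap A R p} : Ideal R) =
      Ideal.ramificationIdx' (Ideal.span {p}) w.asIdeal := by
  classical
  have hmap : Ideal.map (algebraMap A R) (Ideal.span {p}) = Ideal.span {algebraMap A R p} := by
    rw [Ideal.map_span, Set.image_singleton]
  have hne : Ideal.map (algebraMap A R) (Ideal.span {p}) ≠ ⊥ := by
    rw [hmap]; exact aux_span_map_ne_bot hinj hp.ne_zero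
  rw [count_coe F w (by rw [← hmap]; exact hne),
    count_associates_factors_eq (by rw [← hmap]; exact hne) w.isPrime w.ne_bot,
    Ideal.IsDedekindDomain.ramificationIdx'_eq_normalizedFactors_count hne w.isPrime w.ne_bot,
    hmap]

/-- the ramification index of a prime over `p` is positive. -/
lemma aux_ramificationIdx_pos (hinj : Function.Injective (algebraMap A R))
    {p : A} (hp : Prime p) (w : HeightOneSpectrum R)
    (hmem : algebraMap A R p ∈ w.asIdeal) :
    0 < Ideal.ramificationIdx' (Ideal.span {p}) w.asIdeal := by
  rw [pos_iff_ne_zero]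
  refine Ideal.IsDedekindDomain.ramificationIdx'_ne_zero ?_ w.isPrime ?_
  · rw [Ideal.map_span, Set.image_singleton]
    exact aux_span_map_ne_bot hinj hp.ne_zero
  · rw [Ideal.map_span, Set.image_singleton, Ideal.span_le, Set.singleton_subset_iff]
    exact hmem

end AuxTwo

lemma aux_linearIndependent_pow {K L : Type*} [Field K] [Field L] [Algebra K L] {θ : L} {d : ℕ}
    (hgen : Algebra.adjoin K {θ} = ⊤) (hdim : Module.finrank K L = d) (hd : 0 < d) :
    LinearIndependent K (fun k : Fin d => θ ^ (k : ℕ)) := by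
  have hfin : FiniteDimensional K L := FiniteDimensional.of_finrank_pos (hdim ▸ hd)
  have hint : IsIntegral K θ := Algebra.IsIntegral.isIntegral θ
  let pb0 := Algebra.adjoin.powerBasis hint
  let e : Algebra.adjoin K {θ} ≃ₐ[K] L :=
    (Subalgebra.equivOfEq _ _ hgen).trans Subalgebra.topEquiv
  let pb := pb0.map e
  have hgeneq : pb.gen = θ := by
    show e pb0.gen = θ
    rw [Algebra.adjoin.powerBasis_gen]
    rfl
  have hdimeq : pb.dim = d := by
    rw [← hdim, ← PowerBasis.finrank pb]
  have hli := pb.basis.linearIndependent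
  have hfun : ∀ k : Fin d, θ ^ (k:ℕ) = pb.basis (Fin.cast hdimeq.symm k) := by
    intro k
    rw [pb.coe_basis, hgeneq]
    rfl
  rw [funext hfun]
  exact hli.comp (Fin.cast hdimeq.symm) (fun x y h => by
    simpa [Fin.ext_iff] using h)

lemma aux_triangular_mem {A K L : Type*} [CommRing A] [IsDomain A] [Field K] [Algebra A K]
    [IsFractionRing A K] [Field L] [Algebra K L] [Algebra A L] [IsScalarTower A K L]
    {d : ℕ} (hd : 0 < d) {θ : L}
    (LI : LinearIndependent K (fun k : Fin d => θ ^ (k : ℕ)))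
    (a : Fin d → K) (ha : ∀ i, a i ≠ 0)
    (g : Fin d → Polynomial A) (hgmonic : ∀ i, (g i).Monic)
    (hgdeg : ∀ i : Fin d, (g i).natDegree = (i : ℕ))
    (N : Submodule A L) (b : Module.Basis (Fin d) A N)
    (hb : ∀ i : Fin d, (b i : L) = aeval θ (g i) / algebraMap K L (a i)) (x : K) :
    algebraMap K L x ∈ N ↔ ∃ c : A, x = algebraMap A K c / a ⟨0, hd⟩ := by
  have hAK : Function.Injective (algebraMap A K) := IsFractionRing.injective A K
  -- the `y` vector
  set y : (Fin d → A) → Fin d → K :=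
    fun c k => ∑ i : Fin d, algebraMap A K ((g i).coeff (k : ℕ) * c i) / a i with hy_def
  -- Claim T : representation of A-combinations of the basis in the power basis
  have claimT : ∀ c : Fin d → A,
      (∑ i : Fin d, c i • (aeval θ (g i) / algebraMap K L (a i)))
        = ∑ k : Fin d, (y c k) • θ ^ (k : ℕ) := by
    intro c
    have hterm : ∀ i : Fin d, c i • (aeval θ (g i) / algebraMap K L (a i))
        = ∑ k : Fin d, (algebraMap A K ((g i).coeff (k : ℕ) * c i) / a i) • θ ^ (k : ℕ) := by
      intro i
      have hdeg : (g i).natDegree < d := by rw [hgdeg i]; exact i.isLt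
      have haev : aeval θ (g i) = ∑ k : Fin d, algebraMap A L ((g i).coeff (k : ℕ)) * θ ^ (k:ℕ) := by
        rw [aeval_eq_sum_range' hdeg, ← Fin.sum_univ_eq_sum_range]
        exact Finset.sum_congr rfl (fun k _ => by rw [Algebra.smul_def])
      rw [haev, Finset.sum_div, Finset.smul_sum]
      refine Finset.sum_congr rfl (fun k _ => ?_)
      simp only [Algebra.smul_def, div_eq_mul_inv, _root_.map_mul, map_inv₀,
        ← IsScalarTower.algebraMap_apply A K L]
      ring
    rw [Finset.sum_congr rfl (fun i _ => hterm i), Finset.sum_comm]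
    refine Finset.sum_congr rfl (fun k _ => ?_)
    rw [hy_def, Finset.sum_smul]
  -- Claim V : `y c k` when all later coordinates vanish
  have claimV : ∀ (c : Fin d → A) (k : Fin d), (∀ j, k < j → c j = 0) →
      y c k = algebraMap A K (c k) / a k := by
    intro c k hlater
    show (∑ i : Fin d, algebraMap A K ((g i).coeff (k : ℕ) * c i) / a i)
      = algebraMap A K (c k) / a k
    rw [Finset.sum_eq_single k]
    · rw [← hgdeg k, (hgmonic k).coeff_natDegree, one_mul]
    · intro i _ hik
      rcases lt_or_gt_of_ne (fun h : (i:ℕ) = (k:ℕ) => hik (Fin.ext h)) with h | h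
      · rw [coeff_eq_zero_of_natDegree_lt (by rw [hgdeg i]; exact h), zero_mul,
          _root_.map_zero, zero_div]
      · rw [hlater i h, mul_zero, _root_.map_zero, zero_div]
    · intro h; exact absurd (Finset.mem_univ k) h
  constructor
  · -- forward direction
    intro hmem
    set z : N := ⟨algebraMap K L x, hmem⟩ with hz_def
    set c : Fin d → A := fun i => b.repr z i with hc_def
    have hz : (z : L) = ∑ i : Fin d, c i • (b i : L) := by
      conv_lhs => rw [← b.sum_repr z]
      push_cast [Submodule.coe_sum]
      rfl
    have hz2 : algebraMap K L x = ∑ k : Fin d, (y c k) • θ ^ (k : ℕ) := by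
      rw [show algebraMap K L x = (z : L) from rfl, hz, ← claimT c]
      exact Finset.sum_congr rfl (fun i _ => by rw [hb i])
    have hx0 : algebraMap K L x
        = ∑ k : Fin d, (if k = ⟨0, hd⟩ then x else 0) • θ ^ (k : ℕ) := by
      simp only [ite_smul, zero_smul]
      rw [Finset.sum_ite_eq' Finset.univ (⟨0, hd⟩ : Fin d) (fun k => x • θ ^ (k : ℕ))]
      simp [Algebra.smul_def]
    have hy : ∀ k : Fin d, y c k = (if k = ⟨0, hd⟩ then x else 0) := by
      have hzero : ∑ k : Fin d, ((y c k) - (if k = ⟨0, hd⟩ then x else 0)) • θ ^ (k:ℕ) = 0 := by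
        rw [Finset.sum_congr rfl (fun k _ => sub_smul (y c k) _ (θ ^ (k:ℕ))),
          Finset.sum_sub_distrib, ← hz2, ← hx0, sub_self]
      intro k
      exact sub_eq_zero.mp (Fintype.linearIndependent_iff.mp LI _ hzero k)
    have key : ∀ k : Fin d, k ≠ ⟨0, hd⟩ → (∀ j, k < j → c j = 0) → c k = 0 := by
      intro k hk0 hlater
      have h1 : algebraMap A K (c k) / a k = 0 := by
        rw [← claimV c k hlater, hy k, if_neg hk0]
      rw [_root_.div_eq_zero_iff] at h1
      rcases h1 with h1 | h1
      · exact hAK (by rw [h1, _root_.map_zero])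
      · exact absurd h1 (ha k)
    have claimZ : ∀ (M : ℕ) (k : Fin d), d ≤ M + 1 + (k : ℕ) → k ≠ ⟨0, hd⟩ → c k = 0 := by
      intro M
      induction M with
      | zero =>
          intro k hk hk0
          refine key k hk0 (fun j hj => ?_)
          have hj' : (k:ℕ) < (j:ℕ) := hj
          have hjd := j.isLt
          exact (by omega : False).elim
      | succ M ih =>
          intro k hk hk0
          refine key k hk0 (fun j hj => ?_)
          have hj' : (k:ℕ) < (j:ℕ) := hj
          refine ih j (by omega) (fun hj0 => ?_)
          rw [hj0] at hj'
          simp at hj'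
    have hcz : ∀ j : Fin d, j ≠ ⟨0, hd⟩ → c j = 0 :=
      fun j hj => claimZ d j (by omega) hj
    refine ⟨c ⟨0, hd⟩, ?_⟩
    have h0 := hy ⟨0, hd⟩
    rw [if_pos rfl] at h0
    rw [← h0, claimV c ⟨0, hd⟩ (fun j hj => hcz j ?_)]
    intro hj0
    have hj' : ((⟨0,hd⟩ : Fin d):ℕ) < (j:ℕ) := hj
    rw [hj0] at hj'
    simp at hj'
  · -- converse
    rintro ⟨c, rfl⟩
    have hmem : c • (b ⟨0, hd⟩ : L) ∈ N := N.smul_mem c (b ⟨0, hd⟩).2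
    have hg0 : g ⟨0, hd⟩ = 1 := (hgmonic _).natDegree_eq_zero.mp (hgdeg ⟨0, hd⟩)
    have heq : c • (b ⟨0, hd⟩ : L)
        = algebraMap K L (algebraMap A K c / a ⟨0, hd⟩) := by
      rw [hb ⟨0, hd⟩, hg0, _root_.map_one, map_div₀, ← IsScalarTower.algebraMap_apply A K L,
        Algebra.smul_def, div_eq_mul_inv, div_eq_mul_inv, one_mul]
    rwa [heq] at hmem

section Helpers

lemma aux_ceil_le {nn mp : ℤ} {e : ℕ} (he : 0 < e) :
    ⌈(nn : ℚ) / (e : ℚ)⌉ ≤ mp ↔ nn ≤ mp * e := by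
  rw [Int.ceil_le, div_le_iff₀ (by exact_mod_cast he)]
  exact_mod_cast Iff.rfl

end Helpers



open Polynomial

/-- `v_p(x) = k` : the `p`-adic valuation of the nonzero element `x` of the
fraction field equals `k`, i.e. `x = p^k·(u/w)` with `p ∤ u`, `p ∤ w`. -/
def HasValAt {A K : Type*} [CommRing A] [Field K] [Algebra A K]
    (p : A) (x : K) (k : ℤ) : Prop :=
  ∃ u w : A, ¬ p ∣ u ∧ ¬ p ∣ w ∧
    x * algebraMap A K w = algebraMap A K u * algebraMap A K p ^ k

/-- let `I = ∏_𝔭 𝔭^{n_𝔭}` be a fractional ideal of `B` with a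
triangular basis `(1/a_0, g_1(θ)/a_1, …, g_{d−1}(θ)/a_{d−1})`, and for each prime
`p` of `A` let `m_p := max{⌈n_𝔭/e_𝔭⌉ : 𝔭 | p}` (`m_p = 0` when `n_𝔭 = 0` for all
`𝔭 | p`). Then `v_p(a_0) = −m_p` for every prime `p` of `A`, and the normalised
ideal `I* = a_0·I` satisfies `I* = ∏_p ∏_{𝔭|p} 𝔭^{n_𝔭 − e_𝔭·m_p}`. -/
theorem statement12
    -- `A` : a principal ideal domain with fraction field `K`
    (A : Type*) [CommRing A] [IsDomain A] [IsPrincipalIdealRing A]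
    (K : Type*) [Field K] [Algebra A K] [IsFractionRing A K]
    -- `L = K(θ)` of degree `d`, `B` the integral closure of `A` in `L`
    -- (a Dedekind domain with fraction field `L`)
    (L : Type*) [Field L] [Algebra K L] [Algebra A L] [IsScalarTower A K L]
    (f : Polynomial A) (d : ℕ) (hd : 0 < d)
    (hf : f.Monic) (hfdeg : f.natDegree = d) (hfirr : Irreducible f)
    (hfsep : (f.map (algebraMap A K)).Separable)
    (θ : L) (hroot : aeval θ f = 0) (hgen : Algebra.adjoin K {θ} = ⊤)
    (hdim : Module.finrank K L = d)
    [IsDedekindDomain ↥(integralClosure A L)]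
    [IsFractionRing ↥(integralClosure A L) L]
    -- `I` : a nonzero fractional ideal of `B`
    (I : FractionalIdeal (nonZeroDivisors ↥(integralClosure A L)) L) (hI : I ≠ 0)
    -- the prime factorisation `I = ∏_{𝔭 ∈ S} 𝔭^{n_𝔭}` of `I` : `S` is a set of
    -- nonzero prime ideals of `B` which is saturated (if it contains one prime
    -- over a prime `p` of `A` then it contains all of them)
    (S : Finset (Ideal ↥(integralClosure A L)))
    (hSprime : ∀ 𝔭 ∈ S, 𝔭.IsPrime ∧ 𝔭 ≠ ⊥)
    (hSsat : ∀ p : A, Prime p →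
      (∃ 𝔭 ∈ S, algebraMap A ↥(integralClosure A L) p ∈ 𝔭) →
      ∀ Q : Ideal ↥(integralClosure A L), Q.IsPrime → Q ≠ ⊥ →
        algebraMap A ↥(integralClosure A L) p ∈ Q → Q ∈ S)
    (n : Ideal ↥(integralClosure A L) → ℤ)
    (hfac : I = ∏ 𝔭 ∈ S,
      (𝔭 : FractionalIdeal (nonZeroDivisors ↥(integralClosure A L)) L) ^ n 𝔭)
    -- the primes of `A` below the elements of `S`
    (below : Ideal ↥(integralClosure A L) → A)
    (hbelow : ∀ 𝔭 ∈ S, Prime (below 𝔭) ∧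
      algebraMap A ↥(integralClosure A L) (below 𝔭) ∈ 𝔭)
    -- `m 𝔭 = m_p` for `p` the prime below `𝔭` :
    -- `m_p = max{⌈n_𝔮/e_𝔮⌉ : 𝔮 | p}`, `e_𝔮` being the ramification index
    (m : Ideal ↥(integralClosure A L) → ℤ)
    (hm : ∀ 𝔭 ∈ S, IsGreatest {z : ℤ | ∃ 𝔮 ∈ S,
      algebraMap A ↥(integralClosure A L) (below 𝔭) ∈ 𝔮 ∧
      z = ⌈(n 𝔮 : ℚ) / (Ideal.ramificationIdx'
        (Ideal.span {below 𝔭}) 𝔮 : ℚ)⌉} (m 𝔭))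
    -- a triangular basis `(1/a_0, g_1(θ)/a_1, …, g_{d−1}(θ)/a_{d−1})` of `I`
    (a : Fin d → K) (ha : ∀ i, a i ≠ 0)
    (hchain : ∀ i j : Fin d, i ≤ j → ∃ c : A, a j = a i * algebraMap A K c)
    (g : Fin d → Polynomial A)
    (hgmonic : ∀ i, (g i).Monic) (hgdeg : ∀ i : Fin d, (g i).natDegree = (i : ℕ))
    (b : Module.Basis (Fin d) A
      ↥((I : Submodule ↥(integralClosure A L) L).restrictScalars A))
    (hb : ∀ i : Fin d, (b i : L) = aeval θ (g i) / algebraMap K L (a i)) :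
    -- conclusion (1) : `v_p(a_0) = −m_p` for every prime `p` of `A`
    (∀ p : A, Prime p →
      ((∃ 𝔭 ∈ S, algebraMap A ↥(integralClosure A L) p ∈ 𝔭) →
        ∀ mp : ℤ, IsGreatest {z : ℤ | ∃ 𝔮 ∈ S,
            algebraMap A ↥(integralClosure A L) p ∈ 𝔮 ∧
            z = ⌈(n 𝔮 : ℚ) /
              (Ideal.ramificationIdx'
                (Ideal.span {p}) 𝔮 : ℚ)⌉} mp →
          HasValAt p (a ⟨0, hd⟩) (-mp)) ∧
      ((∀ 𝔭 ∈ S, algebraMap A ↥(integralClosure A L) p ∉ 𝔭) →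
        HasValAt p (a ⟨0, hd⟩) 0)) ∧
    -- conclusion (2) : `I* = a_0·I = ∏_{𝔭} 𝔭^{n_𝔭 − e_𝔭·m_p}`
    FractionalIdeal.spanSingleton (nonZeroDivisors ↥(integralClosure A L))
        (algebraMap K L (a ⟨0, hd⟩)) * I =
      ∏ 𝔭 ∈ S, (𝔭 : FractionalIdeal (nonZeroDivisors ↥(integralClosure A L)) L) ^
        (n 𝔭 - (Ideal.ramificationIdx'
          (Ideal.span {below 𝔭}) 𝔭 : ℤ) * m 𝔭) := by
  classical
  have hinjAK : Function.Injective (algebraMap A K) := IsFractionRing.injective A K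
  have hinjKL : Function.Injective (algebraMap K L) := (algebraMap K L).injective
  have hinjAL : Function.Injective (algebraMap A L) := by
    rw [IsScalarTower.algebraMap_eq A K L]
    exact hinjKL.comp hinjAK
  have hinjAB : Function.Injective (algebraMap A ↥(integralClosure A L)) := by
    intro x y hxy
    apply hinjAL
    rw [IsScalarTower.algebraMap_apply A ↥(integralClosure A L) L,
      IsScalarTower.algebraMap_apply A ↥(integralClosure A L) L, hxy]
  have hALeq : ∀ r : A, algebraMap (↥(integralClosure A L)) L
      (algebraMap A ↥(integralClosure A L) r) = algebraMap A L r :=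
    fun r => (IsScalarTower.algebraMap_apply A ↥(integralClosure A L) L r).symm
  have ha0 : a ⟨0, hd⟩ ≠ 0 := ha _
  have ha0L : algebraMap K L (a ⟨0, hd⟩) ≠ 0 := fun h =>
    ha0 (hinjKL (by rw [h, _root_.map_zero]))
  haveI hint : Algebra.IsIntegral A ↥(integralClosure A L) := inferInstance
  have LI : LinearIndependent K (fun k : Fin d => θ ^ (k : ℕ)) :=
    aux_linearIndependent_pow hgen hdim hd
  -- membership characterisation from the triangular basis
  have hmemI : ∀ x : K, algebraMap K L x ∈ I ↔
      ∃ c : A, x = algebraMap A K c / a ⟨0, hd⟩ := by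
    intro x
    rw [← FractionalIdeal.mem_coe (I := I)]
    exact aux_triangular_mem hd LI a ha g hgmonic hgdeg
      ((I : Submodule ↥(integralClosure A L) L).restrictScalars A) b hb x
  -- counts of products over S
  have hSne : ∀ 𝔭 ∈ S, (𝔭 : FractionalIdeal (nonZeroDivisors ↥(integralClosure A L)) L) ≠ 0 :=
    fun 𝔭 h𝔭 => coeIdeal_ne_zero.mpr (hSprime 𝔭 h𝔭).2
  have hprodcount : ∀ (E : Ideal ↥(integralClosure A L) → ℤ)
      (w : HeightOneSpectrum ↥(integralClosure A L)),
      count L w (∏ 𝔭 ∈ S,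
          (𝔭 : FractionalIdeal (nonZeroDivisors ↥(integralClosure A L)) L) ^ E 𝔭)
        = if w.asIdeal ∈ S then E w.asIdeal else 0 := by
    intro E w
    have hne : ∀ 𝔭 ∈ S, (𝔭 : FractionalIdeal (nonZeroDivisors ↥(integralClosure A L)) L) ^ E 𝔭 ≠ 0 :=
      fun 𝔭 h𝔭 => zpow_ne_zero _ (hSne 𝔭 h𝔭)
    rw [count_prod L w S _ hne]
    by_cases hw : w.asIdeal ∈ S
    · rw [if_pos hw, Finset.sum_eq_single w.asIdeal]
      · rw [count_zpow, count_self, mul_one]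
      · intro 𝔭 h𝔭 hne2
        obtain ⟨hpr, hb0⟩ := hSprime 𝔭 h𝔭
        have : count L w (𝔭 : FractionalIdeal (nonZeroDivisors ↥(integralClosure A L)) L) = 0 := by
          have := count_maximal_coprime L w
            (w := (⟨𝔭, hpr, hb0⟩ : HeightOneSpectrum ↥(integralClosure A L)))
            (fun hc => hne2 (by simpa using congrArg HeightOneSpectrum.asIdeal hc))
          simpa using this
        rw [count_zpow, this, mul_zero]
      · intro hc; exact absurd hw hc
    · rw [if_neg hw]
      refine Finset.sum_eq_zero (fun 𝔭 h𝔭 => ?_)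
      obtain ⟨hpr, hb0⟩ := hSprime 𝔭 h𝔭
      have : count L w (𝔭 : FractionalIdeal (nonZeroDivisors ↥(integralClosure A L)) L) = 0 := by
        have := count_maximal_coprime L w
          (w := (⟨𝔭, hpr, hb0⟩ : HeightOneSpectrum ↥(integralClosure A L)))
          (fun hc => hw (by rw [← congrArg HeightOneSpectrum.asIdeal hc]; exact h𝔭))
        simpa using this
      rw [count_zpow, this, mul_zero]
  have hcount : ∀ w : HeightOneSpectrum ↥(integralClosure A L),
      count L w I = if w.asIdeal ∈ S then n w.asIdeal else 0 := by
    intro w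
    rw [hfac]
    exact hprodcount n w
  -- counts of spans of images of elements of A
  have hcsp : ∀ r : A, spanSingleton (nonZeroDivisors ↥(integralClosure A L))
      (algebraMap A L r) = ((Ideal.span {algebraMap A ↥(integralClosure A L) r} :
        Ideal ↥(integralClosure A L)) :
        FractionalIdeal (nonZeroDivisors ↥(integralClosure A L)) L) := by
    intro r
    rw [coeIdeal_span_singleton, hALeq]
  -- the count of span(a₀) at a prime over p, given a p-adic expression for a₀
  have hvalcount : ∀ p : A, Prime p → ∀ u' v' : A, ¬ p ∣ u' → ¬ p ∣ v' → ∀ γ : ℤ,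
      a ⟨0, hd⟩ * algebraMap A K v' = algebraMap A K u' * algebraMap A K p ^ γ →
      ∀ w : HeightOneSpectrum ↥(integralClosure A L),
        algebraMap A ↥(integralClosure A L) p ∈ w.asIdeal →
        count L w (spanSingleton (nonZeroDivisors ↥(integralClosure A L))
          (algebraMap K L (a ⟨0, hd⟩)))
          = γ * (Ideal.ramificationIdx'
              (Ideal.span {p}) w.asIdeal : ℤ) := by
    intro p hp u' v' hu' hv' γ heq w hw
    have hu'ne : u' ≠ 0 := fun h => hu' (h ▸ dvd_zero p)
    have hv'ne : v' ≠ 0 := fun h => hv' (h ▸ dvd_zero p)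
    have hpne : p ≠ 0 := hp.ne_zero
    have hu'L : algebraMap A L u' ≠ 0 := fun h => hu'ne (hinjAL (by rw [h, _root_.map_zero]))
    have hv'L : algebraMap A L v' ≠ 0 := fun h => hv'ne (hinjAL (by rw [h, _root_.map_zero]))
    have hpL : algebraMap A L p ≠ 0 := fun h => hpne (hinjAL (by rw [h, _root_.map_zero]))
    have hL : algebraMap K L (a ⟨0, hd⟩) * algebraMap A L v'
        = algebraMap A L u' * (algebraMap A L p) ^ γ := by
      have h2 := congrArg (algebraMap K L) heq
      simpa only [_root_.map_mul, map_zpow₀, ← IsScalarTower.algebraMap_apply A K L] using h2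
    have hsp_eq : spanSingleton (nonZeroDivisors ↥(integralClosure A L))
          (algebraMap K L (a ⟨0, hd⟩))
          * spanSingleton (nonZeroDivisors ↥(integralClosure A L)) (algebraMap A L v')
        = spanSingleton (nonZeroDivisors ↥(integralClosure A L)) (algebraMap A L u')
          * (spanSingleton (nonZeroDivisors ↥(integralClosure A L)) (algebraMap A L p)) ^ γ := by
      rw [aux_spanSingleton_zpow, spanSingleton_mul_spanSingleton,
        spanSingleton_mul_spanSingleton]
      exact congrArg _ hL
    have e1 := congrArg (count L w) hsp_eq
    rw [count_mul L w (spanSingleton_ne_zero_iff.mpr ha0L) (spanSingleton_ne_zero_iff.mpr hv'L),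
      count_mul L w (spanSingleton_ne_zero_iff.mpr hu'L)
        (zpow_ne_zero _ (spanSingleton_ne_zero_iff.mpr hpL)),
      count_zpow] at e1
    have hv'0 : count L w (spanSingleton (nonZeroDivisors ↥(integralClosure A L))
        (algebraMap A L v')) = 0 := by
      rw [hcsp v']
      exact aux_count_span_zero L hinjAB hv'ne w
        (fun hc => hv' ((aux_mem_prime_iff_dvd hinjAB hp w hw v').mp hc))
    have hu'0 : count L w (spanSingleton (nonZeroDivisors ↥(integralClosure A L))
        (algebraMap A L u')) = 0 := by
      rw [hcsp u']
      exact aux_count_span_zero L hinjAB hu'ne w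
        (fun hc => hu' ((aux_mem_prime_iff_dvd hinjAB hp w hw u').mp hc))
    have hp0 : count L w (spanSingleton (nonZeroDivisors ↥(integralClosure A L))
        (algebraMap A L p))
        = (Ideal.ramificationIdx'
            (Ideal.span {p}) w.asIdeal : ℤ) := by
      rw [hcsp p]
      exact aux_count_span_p L hinjAB hp w hw
    rw [hv'0, hu'0, hp0] at e1
    omega
  -- existence of a p-adic expression for a₀
  have hvalex : ∀ p : A, Prime p → ∃ u' v' : A, ¬ p ∣ u' ∧ ¬ p ∣ v' ∧ ∃ γ : ℤ,
      a ⟨0, hd⟩ * algebraMap A K v' = algebraMap A K u' * algebraMap A K p ^ γ := by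
    intro p hp
    obtain ⟨x, y, hy, hxy⟩ := IsFractionRing.div_surjective (A := A) (a ⟨0, hd⟩)
    have hyne : y ≠ 0 := nonZeroDivisors.ne_zero hy
    have hxne : x ≠ 0 := by
      intro h
      rw [h, _root_.map_zero, zero_div] at hxy
      exact ha0 hxy.symm
    obtain ⟨α, u', hu', hxu⟩ := WfDvdMonoid.max_power_factor hxne hp.irreducible
    obtain ⟨β, v', hv', hyv⟩ := WfDvdMonoid.max_power_factor hyne hp.irreducible
    refine ⟨u', v', hu', hv', (α : ℤ) - (β : ℤ), ?_⟩
    have hpK : algebraMap A K p ≠ 0 :=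
      fun h => hp.ne_zero (hinjAK (by rw [h, _root_.map_zero]))
    have hyK : algebraMap A K y ≠ 0 :=
      fun h => hyne (hinjAK (by rw [h, _root_.map_zero]))
    have h1 : a ⟨0, hd⟩ * algebraMap A K y = algebraMap A K x := by
      rw [← hxy, div_mul_cancel₀ _ hyK]
    rw [hxu, hyv, _root_.map_mul, _root_.map_mul, map_pow, map_pow] at h1
    rw [zpow_sub₀ hpK, zpow_natCast, zpow_natCast]
    field_simp
    linear_combination h1
  -- existence of a height-one prime over p
  have hover : ∀ p : A, Prime p → ∃ w : HeightOneSpectrum ↥(integralClosure A L),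
      algebraMap A ↥(integralClosure A L) p ∈ w.asIdeal := by
    intro p hp
    haveI hPprime : (Ideal.span {p}).IsPrime := (Ideal.span_singleton_prime hp.ne_zero).mpr hp
    obtain ⟨Q, _, hQprime, hQcomap⟩ :=
      Ideal.exists_ideal_over_prime_of_isIntegral (R := A)
        (S := ↥(integralClosure A L)) (Ideal.span {p}) ⊥
        (fun x hx => by
          have hx0 : algebraMap A ↥(integralClosure A L) x = 0 :=
            Ideal.mem_bot.mp (Ideal.mem_comap.mp hx)
          have : x = 0 := hinjAB (by rw [hx0, _root_.map_zero])
          rw [this]; exact zero_mem _)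
    have hQne : Q ≠ ⊥ := by
      rintro rfl
      have hpmem : p ∈ Ideal.comap (algebraMap A ↥(integralClosure A L)) (⊥ : Ideal _) :=
        hQcomap ▸ Ideal.mem_span_singleton_self p
      have : algebraMap A ↥(integralClosure A L) p = 0 :=
        Ideal.mem_bot.mp (Ideal.mem_comap.mp hpmem)
      exact hp.ne_zero (hinjAB (by rw [this, _root_.map_zero]))
    refine ⟨⟨Q, hQprime, hQne⟩, ?_⟩
    exact Ideal.mem_comap.mp (hQcomap ▸ Ideal.mem_span_singleton_self p)
  -- THE KEY uniqueness result
  have huniq : ∀ p : A, Prime p → ∀ u' v' : A, ¬ p ∣ u' → ¬ p ∣ v' → ∀ γ : ℤ,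
      a ⟨0, hd⟩ * algebraMap A K v' = algebraMap A K u' * algebraMap A K p ^ γ →
      ∀ Mp : ℤ,
      ((∃ 𝔭 ∈ S, algebraMap A ↥(integralClosure A L) p ∈ 𝔭) ∧
        IsGreatest {z : ℤ | ∃ 𝔮 ∈ S,
            algebraMap A ↥(integralClosure A L) p ∈ 𝔮 ∧
            z = ⌈(n 𝔮 : ℚ) /
              (Ideal.ramificationIdx'
                (Ideal.span {p}) 𝔮 : ℚ)⌉} Mp) ∨
      ((∀ 𝔭 ∈ S, algebraMap A ↥(integralClosure A L) p ∉ 𝔭) ∧ Mp = 0) →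
      γ = -Mp := by
    intro p hp u' v' hu' hv' γ heq Mp hMp
    have hpne : p ≠ 0 := hp.ne_zero
    have hpK : algebraMap A K p ≠ 0 := fun h => hpne (hinjAK (by rw [h, _root_.map_zero]))
    -- counts of `I` are bounded by those of `span (a₀⁻¹)`
    have hkey : ∀ w : HeightOneSpectrum ↥(integralClosure A L),
        algebraMap A ↥(integralClosure A L) p ∈ w.asIdeal →
        count L w I ≤ -(γ * (Ideal.ramificationIdx'
          (Ideal.span {p}) w.asIdeal : ℤ)) := by
      intro w hw
      have hmem1 : algebraMap K L (1 / a ⟨0, hd⟩) ∈ I := (hmemI _).mpr ⟨1, by rw [_root_.map_one]⟩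
      have hxne : algebraMap K L (1 / a ⟨0, hd⟩) ≠ 0 := fun h => (one_div_ne_zero ha0)
        (hinjKL (by rw [h, _root_.map_zero]))
      have hcle := (aux_mem_iff_count L hxne hI).mp hmem1 w
      have hspinv : spanSingleton (nonZeroDivisors ↥(integralClosure A L))
          (algebraMap K L (1 / a ⟨0, hd⟩))
          = (spanSingleton (nonZeroDivisors ↥(integralClosure A L))
              (algebraMap K L (a ⟨0, hd⟩)))⁻¹ := by
        rw [map_div₀, _root_.map_one, spanSingleton_inv, one_div]
      rw [hspinv, count_inv, hvalcount p hp u' v' hu' hv' γ heq w hw] at hcle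
      exact hcle
    -- upper bound : γ ≤ -Mp
    have hub : γ ≤ -Mp := by
      rcases hMp with ⟨hex, hMpmem, hMpub⟩ | ⟨hnone, rfl⟩
      · have hup : Mp ≤ -γ := by
          obtain ⟨𝔮, h𝔮S, h𝔮mem, hMpeq⟩ := hMpmem
          set w : HeightOneSpectrum ↥(integralClosure A L) :=
            ⟨𝔮, (hSprime _ h𝔮S).1, (hSprime _ h𝔮S).2⟩ with hwdef
          have he_pos : 0 < Ideal.ramificationIdx'
              (Ideal.span {p}) 𝔮 := aux_ramificationIdx_pos hinjAB hp w h𝔮mem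
          have hc := hkey w h𝔮mem
          rw [hcount w] at hc
          rw [show w.asIdeal = 𝔮 from rfl, if_pos h𝔮S] at hc
          rw [hMpeq, aux_ceil_le he_pos]
          linarith [hc]
        omega
      · obtain ⟨w, hw⟩ := hover p hp
        have hwS : w.asIdeal ∉ S := fun hc => hnone w.asIdeal hc hw
        have hc := hkey w hw
        rw [hcount w, if_neg hwS] at hc
        have he_pos : 0 < Ideal.ramificationIdx'
            (Ideal.span {p}) w.asIdeal := aux_ramificationIdx_pos hinjAB hp w hw
        have he1 : (1:ℤ) ≤ (Ideal.ramificationIdx'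
            (Ideal.span {p}) w.asIdeal : ℤ) := by exact_mod_cast he_pos
        nlinarith [hc, he1]
    -- lower bound : -Mp ≤ γ
    have hlb : -Mp ≤ γ := by
      set T := S.filter (fun 𝔭 => algebraMap A ↥(integralClosure A L) p ∉ 𝔭) with hT
      set t := ∏ 𝔭 ∈ T, below 𝔭 with ht
      set k := S.sup (fun 𝔭 => (n 𝔭).toNat) with hkdef
      have htprime : ∀ 𝔭 ∈ T, Prime (below 𝔭) :=
        fun 𝔭 h𝔭 => (hbelow 𝔭 (Finset.mem_of_mem_filter _ h𝔭)).1
      have hpt : ¬ p ∣ t := by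
        intro hdvd
        obtain ⟨𝔭, h𝔭T, hdvd𝔭⟩ := hp.exists_mem_finset_dvd hdvd
        have hassoc := hp.associated_of_dvd (htprime 𝔭 h𝔭T) hdvd𝔭
        obtain ⟨s, hs⟩ := hassoc.symm.dvd
        have hmem : algebraMap A ↥(integralClosure A L) p ∈ 𝔭 := by
          rw [hs, _root_.map_mul]
          exact Ideal.mul_mem_right _ _ (hbelow 𝔭 (Finset.mem_of_mem_filter _ h𝔭T)).2
        exact (Finset.mem_filter.mp h𝔭T).2 hmem
      have htne : t ≠ 0 := fun h0 => hpt (h0 ▸ dvd_zero p)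
      have htKne : algebraMap A K (t ^ k) ≠ 0 :=
        fun h => pow_ne_zero k htne (hinjAK (by rw [h, _root_.map_zero]))
      have htLne : algebraMap A L t ≠ 0 :=
        fun h => htne (hinjAL (by rw [h, _root_.map_zero]))
      have hpLne : algebraMap A L p ≠ 0 :=
        fun h => hpne (hinjAL (by rw [h, _root_.map_zero]))
      set x0 : K := algebraMap A K p ^ Mp * algebraMap A K (t ^ k) with hx0def
      have hx0ne : x0 ≠ 0 := mul_ne_zero (zpow_ne_zero _ hpK) htKne
      have hx0Lne : algebraMap K L x0 ≠ 0 :=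
        fun h => hx0ne (hinjKL (by rw [h, _root_.map_zero]))
      -- count of span x0
      have hspx0 : ∀ w : HeightOneSpectrum ↥(integralClosure A L),
          count L w (spanSingleton (nonZeroDivisors ↥(integralClosure A L))
            (algebraMap K L x0))
          = Mp * count L w (spanSingleton (nonZeroDivisors ↥(integralClosure A L))
              (algebraMap A L p))
            + (k:ℤ) * count L w (spanSingleton (nonZeroDivisors ↥(integralClosure A L))
              (algebraMap A L t)) := by
        intro w
        have hrepr : algebraMap K L x0 = (algebraMap A L p) ^ Mp * (algebraMap A L t) ^ k := by
          simp only [hx0def, _root_.map_mul, map_zpow₀, _root_.map_pow,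
            ← IsScalarTower.algebraMap_apply A K L]
        have hspeq : spanSingleton (nonZeroDivisors ↥(integralClosure A L))
              (algebraMap K L x0)
            = (spanSingleton (nonZeroDivisors ↥(integralClosure A L)) (algebraMap A L p)) ^ Mp
              * (spanSingleton (nonZeroDivisors ↥(integralClosure A L))
                  (algebraMap A L t)) ^ k := by
          rw [aux_spanSingleton_zpow, spanSingleton_pow, spanSingleton_mul_spanSingleton, hrepr]
        rw [hspeq, count_mul L w (zpow_ne_zero _ (spanSingleton_ne_zero_iff.mpr hpLne))
          (pow_ne_zero _ (spanSingleton_ne_zero_iff.mpr htLne)), count_zpow, count_pow]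
      have htnonneg : ∀ w : HeightOneSpectrum ↥(integralClosure A L),
          0 ≤ count L w (spanSingleton (nonZeroDivisors ↥(integralClosure A L))
            (algebraMap A L t)) := by
        intro w
        rw [hcsp t]
        exact count_coe_nonneg L w _
      -- membership of x₀ in I
      have hx0mem : algebraMap K L x0 ∈ I := by
        rw [aux_mem_iff_count L hx0Lne hI]
        intro w
        rw [hspx0 w, hcount w]
        by_cases hwS : w.asIdeal ∈ S
        · rw [if_pos hwS]
          by_cases hwp : algebraMap A ↥(integralClosure A L) p ∈ w.asIdeal
          · -- w ∈ S over p : use the bound via Mp being an upper bound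
            rcases hMp with ⟨hex, hMpmem, hMpub⟩ | ⟨hnone, rfl⟩
            · have hzmem : ⌈(n w.asIdeal : ℚ) /
                  (Ideal.ramificationIdx'
                    (Ideal.span {p}) w.asIdeal : ℚ)⌉ ≤ Mp :=
                hMpub ⟨w.asIdeal, hwS, hwp, rfl⟩
              have he_pos : 0 < Ideal.ramificationIdx'
                  (Ideal.span {p}) w.asIdeal := aux_ramificationIdx_pos hinjAB hp w hwp
              rw [aux_ceil_le he_pos] at hzmem
              have hcp : count L w (spanSingleton (nonZeroDivisors ↥(integralClosure A L))
                  (algebraMap A L p))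
                  = (Ideal.ramificationIdx'
                      (Ideal.span {p}) w.asIdeal : ℤ) := by
                rw [hcsp p]
                exact aux_count_span_p L hinjAB hp w hwp
              rw [hcp]
              nlinarith [htnonneg w, hzmem, Int.ofNat_zero_le k]
            · exact absurd hwp (hnone w.asIdeal hwS)
          · -- w ∈ S not over p : use the `t^k` part
            have hcp0 : count L w (spanSingleton (nonZeroDivisors ↥(integralClosure A L))
                (algebraMap A L p)) = 0 := by
              rw [hcsp p]
              exact aux_count_span_zero L hinjAB hpne w hwp
            have hwT : w.asIdeal ∈ T := Finset.mem_filter.mpr ⟨hwS, hwp⟩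
            obtain ⟨s, hs⟩ := Finset.dvd_prod_of_mem below hwT
            have hsne : s ≠ 0 := fun h0 => htne (by rw [ht, hs, h0, mul_zero])
            have hsLne : algebraMap A L s ≠ 0 :=
              fun h => hsne (hinjAL (by rw [h, _root_.map_zero]))
            have hbwprime : Prime (below w.asIdeal) := (hbelow _ hwS).1
            have hbwLne : algebraMap A L (below w.asIdeal) ≠ 0 :=
              fun h => hbwprime.ne_zero (hinjAL (by rw [h, _root_.map_zero]))
            have hct : count L w (spanSingleton (nonZeroDivisors ↥(integralClosure A L))
                (algebraMap A L t))
                = count L w (spanSingleton (nonZeroDivisors ↥(integralClosure A L))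
                    (algebraMap A L (below w.asIdeal)))
                  + count L w (spanSingleton (nonZeroDivisors ↥(integralClosure A L))
                    (algebraMap A L s)) := by
              rw [← count_mul L w (spanSingleton_ne_zero_iff.mpr hbwLne)
                (spanSingleton_ne_zero_iff.mpr hsLne), spanSingleton_mul_spanSingleton,
                ← _root_.map_mul, ← hs]
            have hbw : count L w (spanSingleton (nonZeroDivisors ↥(integralClosure A L))
                (algebraMap A L (below w.asIdeal)))
                = (Ideal.ramificationIdx'
                    (Ideal.span {below w.asIdeal}) w.asIdeal : ℤ) := by
              rw [hcsp (below w.asIdeal)]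
              exact aux_count_span_p L hinjAB hbwprime w (hbelow _ hwS).2
            have hepos : 0 < Ideal.ramificationIdx'
                (Ideal.span {below w.asIdeal}) w.asIdeal :=
              aux_ramificationIdx_pos hinjAB hbwprime w (hbelow _ hwS).2
            have hsnonneg : 0 ≤ count L w (spanSingleton
                (nonZeroDivisors ↥(integralClosure A L)) (algebraMap A L s)) := by
              rw [hcsp s]
              exact count_coe_nonneg L w _
            have hkn : (n w.asIdeal : ℤ) ≤ (k : ℤ) := by
              have h2 : (n w.asIdeal).toNat ≤ k :=
                hkdef ▸ Finset.le_sup (f := fun 𝔭 => (n 𝔭).toNat) hwS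
              omega
            have hct1 : (1:ℤ) ≤ count L w (spanSingleton
                (nonZeroDivisors ↥(integralClosure A L)) (algebraMap A L t)) := by
              rw [hct, hbw]
              have : (1:ℤ) ≤ (Ideal.ramificationIdx'
                  (Ideal.span {below w.asIdeal}) w.asIdeal : ℤ) := by exact_mod_cast hepos
              omega
            rw [hcp0, mul_zero, zero_add]
            nlinarith [hct1, hkn, Int.ofNat_zero_le k]
        · rw [if_neg hwS]
          have hcp0 : Mp * count L w (spanSingleton (nonZeroDivisors ↥(integralClosure A L))
              (algebraMap A L p)) = 0 := by
            rcases hMp with ⟨hex, hMpmem, hMpub⟩ | ⟨hnone, rfl⟩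
            · have hwp : algebraMap A ↥(integralClosure A L) p ∉ w.asIdeal :=
                fun hc => hwS (hSsat p hp hex w.asIdeal w.isPrime w.ne_bot hc)
              rw [hcsp p, aux_count_span_zero L hinjAB hpne w hwp, mul_zero]
            · rw [zero_mul]
          rw [hcp0, zero_add]
          nlinarith [htnonneg w, Int.ofNat_zero_le k]
      -- extract the ring element and derive the bound
      obtain ⟨c, hc⟩ := (hmemI x0).mp hx0mem
      by_contra hcon
      push_neg at hcon
      set s' : ℕ := (-(γ + Mp)).toNat with hs'def
      have hs'pos : 0 < s' := by omega
      have hs'eq : (s' : ℤ) = -(γ + Mp) := by omega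
      have hC : algebraMap A K c = x0 * a ⟨0, hd⟩ := by
        rw [hc, div_mul_cancel₀ _ ha0]
      have hzp : (algebraMap A K p) ^ Mp * (algebraMap A K p) ^ γ
          * (algebraMap A K p) ^ (s' : ℤ) = 1 := by
        rw [← zpow_add₀ hpK, ← zpow_add₀ hpK, show Mp + γ + (s' : ℤ) = 0 by omega, zpow_zero]
      have hgoal : algebraMap A K c * algebraMap A K v' * (algebraMap A K p) ^ (s' : ℤ)
          = algebraMap A K (t ^ k) * algebraMap A K u' := by
        calc algebraMap A K c * algebraMap A K v' * (algebraMap A K p) ^ (s' : ℤ)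
            = (algebraMap A K p ^ Mp * algebraMap A K (t ^ k))
              * (a ⟨0, hd⟩ * algebraMap A K v') * (algebraMap A K p) ^ (s' : ℤ) := by
              rw [hC, hx0def]; ring
          _ = (algebraMap A K p ^ Mp * algebraMap A K (t ^ k))
              * (algebraMap A K u' * algebraMap A K p ^ γ)
              * (algebraMap A K p) ^ (s' : ℤ) := by rw [heq]
          _ = algebraMap A K (t ^ k) * algebraMap A K u'
              * ((algebraMap A K p) ^ Mp * (algebraMap A K p) ^ γ
                * (algebraMap A K p) ^ (s' : ℤ)) := by ring
          _ = algebraMap A K (t ^ k) * algebraMap A K u' := by rw [hzp, mul_one]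
      have hE : algebraMap A K (c * v' * p ^ s') = algebraMap A K (t ^ k * u') := by
        rw [_root_.map_mul, _root_.map_mul, _root_.map_mul, map_pow,
          ← zpow_natCast (algebraMap A K p) s']
        exact hgoal
      have hAeq : c * v' * p ^ s' = t ^ k * u' := hinjAK hE
      have hdvd : p ∣ t ^ k * u' := by
        rw [← hAeq]
        exact Dvd.dvd.mul_left (dvd_pow_self p hs'pos.ne') _
      rcases hp.dvd_mul.mp hdvd with hdv | hdv
      · exact hpt (hp.dvd_of_dvd_pow hdv)
      · exact hu' hdv
    omega
  constructor
  · -- conclusion (1)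
    intro p hp
    obtain ⟨u', v', hu', hv', γ, heq⟩ := hvalex p hp
    constructor
    · intro hex mp hmp
      have hγ : γ = -mp := huniq p hp u' v' hu' hv' γ heq mp (Or.inl ⟨hex, hmp⟩)
      exact ⟨u', v', hu', hv', by rw [← hγ]; exact heq⟩
    · intro hnone
      have hγ : γ = -0 := huniq p hp u' v' hu' hv' γ heq 0 (Or.inr ⟨hnone, rfl⟩)
      exact ⟨u', v', hu', hv', by rw [show (0:ℤ) = γ by omega]; exact heq⟩
  · -- conclusion (2)
    have hLHSne : spanSingleton (nonZeroDivisors ↥(integralClosure A L))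
        (algebraMap K L (a ⟨0, hd⟩)) * I ≠ 0 :=
      mul_ne_zero (spanSingleton_ne_zero_iff.mpr ha0L) hI
    have hRHSne : (∏ 𝔭 ∈ S,
        (𝔭 : FractionalIdeal (nonZeroDivisors ↥(integralClosure A L)) L) ^
          (n 𝔭 - (Ideal.ramificationIdx'
            (Ideal.span {below 𝔭}) 𝔭 : ℤ) * m 𝔭)) ≠ 0 :=
      Finset.prod_ne_zero_iff.mpr (fun 𝔭 h𝔭 => zpow_ne_zero _ (hSne 𝔭 h𝔭))
    refine aux_eq_of_count L hLHSne hRHSne (fun w => ?_)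
    rw [count_mul L w (spanSingleton_ne_zero_iff.mpr ha0L) hI, hcount w,
      hprodcount (fun 𝔭 => n 𝔭 - (Ideal.ramificationIdx'
        (Ideal.span {below 𝔭}) 𝔭 : ℤ) * m 𝔭) w]
    by_cases hwS : w.asIdeal ∈ S
    · rw [if_pos hwS, if_pos hwS]
      have hbp : Prime (below w.asIdeal) := (hbelow _ hwS).1
      have hbpmem := (hbelow _ hwS).2
      obtain ⟨u', v', hu', hv', γ, heq⟩ := hvalex (below w.asIdeal) hbp
      have hγ : γ = -(m w.asIdeal) :=
        huniq (below w.asIdeal) hbp u' v' hu' hv' γ heq (m w.asIdeal)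
          (Or.inl ⟨⟨w.asIdeal, hwS, hbpmem⟩, hm w.asIdeal hwS⟩)
      rw [hvalcount (below w.asIdeal) hbp u' v' hu' hv' γ heq w hbpmem, hγ]
      ring
    · rw [if_neg hwS, if_neg hwS]
      -- find a prime of A below w
      have hcomap_ne : Ideal.comap (algebraMap A ↥(integralClosure A L)) w.asIdeal ≠ ⊥ :=
        fun hc => w.ne_bot (Ideal.eq_bot_of_comap_eq_bot hc)
      obtain ⟨q, hq⟩ := (IsPrincipalIdealRing.principal
        (Ideal.comap (algebraMap A ↥(integralClosure A L)) w.asIdeal)).principal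
      have hq0 : q ≠ 0 := by
        intro h0
        apply hcomap_ne
        rw [hq, h0]
        exact Ideal.span_singleton_eq_bot.mpr rfl
      have hqprime : Prime q := by
        rw [← Ideal.span_singleton_prime hq0]
        rw [show Ideal.span {q} = Ideal.comap (algebraMap A ↥(integralClosure A L)) w.asIdeal
          from hq.symm]
        exact Ideal.IsPrime.comap _
      have hqmem : algebraMap A ↥(integralClosure A L) q ∈ w.asIdeal := by
        have : q ∈ Ideal.comap (algebraMap A ↥(integralClosure A L)) w.asIdeal := by
          rw [hq]; exact Ideal.mem_span_singleton_self q
        exact Ideal.mem_comap.mp this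
      obtain ⟨u', v', hu', hv', γ, heq⟩ := hvalex q hqprime
      have hnoS : ∀ 𝔭 ∈ S, algebraMap A ↥(integralClosure A L) q ∉ 𝔭 :=
        fun 𝔭 h𝔭 hc => hwS (hSsat q hqprime ⟨𝔭, h𝔭, hc⟩ w.asIdeal w.isPrime w.ne_bot hqmem)
      have hγ : γ = -0 := huniq q hqprime u' v' hu' hv' γ heq 0 (Or.inr ⟨hnoS, rfl⟩)
      rw [hvalcount q hqprime u' v' hu' hv' γ heq w hqmem, hγ]
      ring
end

section
/- Suppose A = k[t] with h(p) := deg(p) (respectively A = ℤ with h(p) := log|p|) for primes p of A. Let D ∈ A be a generator of the index ideal [B : A[θ]] and set h(D) := Σ_p v_p(D)·h(p). Let I be a fractional ideal of B with normalised ideal I*, and define the normalised size h(I) := Σ_p v_p([I* : A[θ]])·h(p). Then h(I) ≥ h(D), with equality if and only if I = α·B for some α ∈ K \ {0}. -/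
open Polynomial

/-- The size `h(c) = Σ_p v_p(c)·h(p)` of an element `c` of `A = k[t]`, where
`h(p) = deg p` : the sum of the degrees (with multiplicity) of the prime factors
of `c`. -/
noncomputable def polySize {𝕜 : Type*} [Field 𝕜] (c : Polynomial 𝕜) : ℕ :=
  ((UniqueFactorizationMonoid.factors c).map Polynomial.natDegree).sum

lemma polySize_eq_natDegree {𝕜 : Type*} [Field 𝕜] {c : Polynomial 𝕜} (hc : c ≠ 0) :
    polySize c = c.natDegree := by
  obtain ⟨u, hu⟩ := UniqueFactorizationMonoid.factors_prod hc
  have h0 : (0 : Polynomial 𝕜) ∉ UniqueFactorizationMonoid.factors c := fun h =>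
    not_irreducible_zero (UniqueFactorizationMonoid.irreducible_of_factor 0 h)
  have hds := Polynomial.natDegree_multiset_prod _ h0
  have hprodne : (UniqueFactorizationMonoid.factors c).prod ≠ 0 := by
    intro h
    rw [h, zero_mul] at hu
    exact hc hu.symm
  rw [polySize, ← hds]
  conv_rhs => rw [← hu]
  rw [Polynomial.natDegree_mul hprodne u.ne_zero,
    Polynomial.natDegree_eq_zero_of_isUnit u.isUnit, add_zero]

/-- case `A = k[t]`, `h(p) = deg p`: for a fractional ideal `I`
of `B` with normalised ideal `I* = a_0·I`, the normalised size
`h(I) = Σ_p v_p([I* : A[θ]])·h(p)` satisfies `h(I) ≥ h(D)`, with equality if and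
only if `I = α·B` for some `α ∈ K \ {0}`. -/
theorem statement13
    -- `A = k[t]` : with fraction field `K`
    (𝕜 : Type*) [Field 𝕜]
    (K : Type*) [Field K] [Algebra (Polynomial 𝕜) K] [IsFractionRing (Polynomial 𝕜) K]
    -- `L = K(θ)` of degree `d`, `B` the integral closure of `A` in `L`
    (L : Type*) [Field L] [Algebra K L] [Algebra (Polynomial 𝕜) L]
    [IsScalarTower (Polynomial 𝕜) K L]
    (f : Polynomial (Polynomial 𝕜)) (d : ℕ) (hd : 0 < d)
    (hf : f.Monic) (hfdeg : f.natDegree = d) (hfirr : Irreducible f)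
    (hfsep : (f.map (algebraMap (Polynomial 𝕜) K)).Separable)
    (θ : L) (hroot : aeval θ f = 0) (hgen : Algebra.adjoin K {θ} = ⊤)
    (hdim : Module.finrank K L = d)
    -- `D` : a generator of the index ideal `[B : A[θ]]`, i.e. `D = det TB` where
    -- `TB` expresses the power basis `(1, θ, …, θ^{d−1})` in an `A`-basis of `B`
    (bB : Module.Basis (Fin d) (Polynomial 𝕜) ↥(integralClosure (Polynomial 𝕜) L))
    (TB : Matrix (Fin d) (Fin d) (Polynomial 𝕜))
    (hTB : ∀ k : Fin d, θ ^ (k : ℕ) = ∑ l, algebraMap (Polynomial 𝕜) L (TB l k) * (bB l : L))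
    -- `I` : a fractional ideal of `B`, with a triangular basis
    -- `(1/a_0, g_1(θ)/a_1, …, g_{d−1}(θ)/a_{d−1})` (so that `I* = a_0·I`)
    (I : Submodule ↥(integralClosure (Polynomial 𝕜) L) L) (hIbot : I ≠ ⊥) (hIfg : I.FG)
    (a : Fin d → K) (ha : ∀ i, a i ≠ 0)
    (hchain : ∀ i j : Fin d, i ≤ j → ∃ c : Polynomial 𝕜, a j = a i * algebraMap (Polynomial 𝕜) K c)
    (g : Fin d → Polynomial (Polynomial 𝕜))
    (hgmonic : ∀ i, (g i).Monic) (hgdeg : ∀ i : Fin d, (g i).natDegree = (i : ℕ))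
    (bI : Module.Basis (Fin d) (Polynomial 𝕜) ↥(I.restrictScalars (Polynomial 𝕜)))
    (hbI : ∀ i : Fin d, (bI i : L) = aeval θ (g i) / algebraMap K L (a i))
    -- `TI` : the matrix expressing the power basis `(1, θ, …, θ^{d−1})` in the
    -- `A`-basis `(a_0·bI_i)_i` of the normalised ideal `I* = a_0·I`, so that
    -- `[I* : A[θ]] = (det TI)`
    (TI : Matrix (Fin d) (Fin d) (Polynomial 𝕜))
    (hTI : ∀ k : Fin d, θ ^ (k : ℕ) =
      ∑ l, algebraMap (Polynomial 𝕜) L (TI l k) *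
        (algebraMap K L (a ⟨0, hd⟩) * (bI l : L))) :
    -- conclusion : `h(I) ≥ h(D)`, with equality iff `I = α·B`, `α ∈ K \ {0}`
    polySize TB.det ≤ polySize TI.det ∧
      (polySize TI.det = polySize TB.det ↔
        ∃ α : K, α ≠ 0 ∧ ∀ x : L, x ∈ I ↔
          ∃ y ∈ integralClosure (Polynomial 𝕜) L, x = algebraMap K L α * y) := by
  classical
  have hinjAK : Function.Injective (algebraMap (Polynomial 𝕜) K) :=
    IsFractionRing.injective (Polynomial 𝕜) K
  have hinjKL : Function.Injective (algebraMap K L) := (algebraMap K L).injective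
  set i0 : Fin d := ⟨0, hd⟩ with hi0
  set a0L : L := algebraMap K L (a i0) with ha0L
  have ha0L0 : a0L ≠ 0 := fun h => ha i0 (hinjKL (by rw [← ha0L, h, map_zero]))
  have hg0 : g i0 = 1 := ((hgmonic i0).natDegree_eq_zero).mp (hgdeg i0)
  have hbI0 : (bI i0 : L) = a0L⁻¹ := by
    rw [hbI i0, hg0, map_one, one_div, ha0L]
  have hbImem : ∀ i, (bI i : L) ∈ I := fun i =>
    (Submodule.restrictScalars_mem _ _ _).mp (bI i).2
  have hsmulBL : ∀ (y : ↥(integralClosure (Polynomial 𝕜) L)) (x : L),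
      y • x = (y : L) * x := fun y x => rfl
  -- representation of elements of I in the basis bI
  have hITrep : ∀ x (hx : x ∈ I),
      x = ∑ i, algebraMap (Polynomial 𝕜) L ((bI.repr ⟨x, hx⟩) i) * (bI i : L) := by
    intro x hx
    conv_lhs => rw [show x = ((⟨x, hx⟩ : ↥(I.restrictScalars (Polynomial 𝕜))) : L) from rfl,
      ← bI.sum_repr ⟨x, hx⟩]
    push_cast [AddSubmonoidClass.coe_finset_sum]
    exact Finset.sum_congr rfl fun i _ => by rw [Algebra.smul_def]
  -- the powers of θ as a K-basis
  set fK : Polynomial K := f.map (algebraMap (Polynomial 𝕜) K) with hfKdef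
  have hfKmonic : fK.Monic := hf.map _
  have hrootK : aeval θ fK = 0 := by rw [hfKdef, aeval_map_algebraMap]; exact hroot
  have hintK : IsIntegral K θ := ⟨fK, hfKmonic, hrootK⟩
  have hfKirr : Irreducible fK :=
    (hf.irreducible_iff_irreducible_map_fraction_map).mp hfirr
  have hmin : minpoly K θ = fK := (minpoly.eq_of_irreducible_of_monic hfKirr hrootK hfKmonic).symm
  have hmindeg : (minpoly K θ).natDegree = d := by
    rw [hmin, hfKdef, hf.natDegree_map, hfdeg]
  let pb : PowerBasis K L := (Algebra.adjoin.powerBasis hintK).map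
    ((Subalgebra.equivOfEq _ _ hgen).trans Subalgebra.topEquiv)
  have hpbdim : pb.dim = d := hmindeg
  let pbB : Module.Basis (Fin d) K L := pb.basis.reindex (finCongr hpbdim)
  have hpbB : ∀ k : Fin d, pbB k = θ ^ (k : ℕ) := by
    intro k
    have hgen' : pb.gen = θ := rfl
    simp [pbB, Module.Basis.reindex_apply, PowerBasis.coe_basis, hgen']
  -- uniqueness of coefficients
  have hrepr : ∀ (b : Module.Basis (Fin d) K L) (m : Fin d → K) (i),
      b.repr (∑ l, m l • b l) i = m i := by
    intro b m i
    simp [map_sum, Finsupp.single_apply]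
  have huniq : ∀ r s : Fin d → K,
      (∑ k, r k • θ ^ (k : ℕ)) = (∑ k, s k • θ ^ (k : ℕ)) → r = s := by
    intro r s hrs
    funext i
    have h1 : (∑ k, r k • pbB k) = ∑ k, s k • pbB k := by
      simpa only [hpbB] using hrs
    have h2 := congrArg (fun x => (pbB.repr x) i) h1
    simpa only [hrepr] using h2
  -- K-smul versions of hTB and hTI
  have hTB' : ∀ k : Fin d, θ ^ (k : ℕ) =
      ∑ l, algebraMap (Polynomial 𝕜) K (TB l k) • ((bB l : L)) := by
    intro k
    rw [hTB k]
    exact Finset.sum_congr rfl fun l _ => by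
      rw [Algebra.smul_def, ← IsScalarTower.algebraMap_apply]
  have hTI' : ∀ k : Fin d, θ ^ (k : ℕ) =
      ∑ l, algebraMap (Polynomial 𝕜) K (TI l k) • (a0L * (bI l : L)) := by
    intro k
    rw [hTI k]
    exact Finset.sum_congr rfl fun l _ => by
      rw [Algebra.smul_def, ← IsScalarTower.algebraMap_apply, ha0L]
  -- bases of L over K coming from bB and from a0 • bI
  have hcard : Fintype.card (Fin d) = Module.finrank K L := by simp [hdim]
  have hspanB : ⊤ ≤ Submodule.span K (Set.range fun l => (bB l : L)) := by
    rw [← pbB.span_eq]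
    refine Submodule.span_le.mpr ?_
    rintro _ ⟨k, rfl⟩
    rw [hpbB k, hTB' k]
    exact Submodule.sum_mem _ fun l _ =>
      Submodule.smul_mem _ _ (Submodule.subset_span ⟨l, rfl⟩)
  have hspanI : ⊤ ≤ Submodule.span K (Set.range fun l => a0L * (bI l : L)) := by
    rw [← pbB.span_eq]
    refine Submodule.span_le.mpr ?_
    rintro _ ⟨k, rfl⟩
    rw [hpbB k, hTI' k]
    exact Submodule.sum_mem _ fun l _ =>
      Submodule.smul_mem _ _ (Submodule.subset_span ⟨l, rfl⟩)
  let bBK : Module.Basis (Fin d) K L := basisOfTopLeSpanOfCardEqFinrank _ hspanB hcard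
  have hbBK : ∀ l, bBK l = (bB l : L) := fun l =>
    congrFun (coe_basisOfTopLeSpanOfCardEqFinrank _ hspanB hcard) l
  let cK : Module.Basis (Fin d) K L := basisOfTopLeSpanOfCardEqFinrank _ hspanI hcard
  have hcK : ∀ l, cK l = a0L * (bI l : L) := fun l =>
    congrFun (coe_basisOfTopLeSpanOfCardEqFinrank _ hspanI hcard) l
  -- the matrices over K
  have hTBmat : bBK.toMatrix pbB = TB.map (algebraMap (Polynomial 𝕜) K) := by
    ext i k
    rw [Module.Basis.toMatrix_apply, Matrix.map_apply, hpbB k, hTB' k]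
    have h1 : (∑ l, algebraMap (Polynomial 𝕜) K (TB l k) • ((bB l : L)))
        = ∑ l, algebraMap (Polynomial 𝕜) K (TB l k) • bBK l := by
      simp only [hbBK]
    rw [h1, hrepr]
  have hTImat : cK.toMatrix pbB = TI.map (algebraMap (Polynomial 𝕜) K) := by
    ext i k
    rw [Module.Basis.toMatrix_apply, Matrix.map_apply, hpbB k, hTI' k]
    have h1 : (∑ l, algebraMap (Polynomial 𝕜) K (TI l k) • (a0L * (bI l : L)))
        = ∑ l, algebraMap (Polynomial 𝕜) K (TI l k) • cK l := by
      simp only [hcK]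
    rw [h1, hrepr]
  -- the transition matrix S, with entries in A
  have hImem : ∀ y : ↥(integralClosure (Polynomial 𝕜) L), (y : L) * a0L⁻¹ ∈ I := by
    intro y
    have h1 := I.smul_mem y (hbImem i0)
    rwa [hsmulBL, hbI0] at h1
  have hwmem : ∀ l, (bB l : L) * a0L⁻¹ ∈ I := fun l => hImem (bB l)
  set S : Matrix (Fin d) (Fin d) (Polynomial 𝕜) :=
    fun i l => bI.repr ⟨(bB l : L) * a0L⁻¹, hwmem l⟩ i with hSdef
  have hSrepL : ∀ l, (bB l : L) =
      ∑ i, algebraMap (Polynomial 𝕜) L (S i l) * (a0L * (bI i : L)) := by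
    intro l
    have h1 := hITrep _ (hwmem l)
    have h2 : (bB l : L) = a0L * ((bB l : L) * a0L⁻¹) := by
      field_simp
    rw [h2, h1, Finset.mul_sum]
    exact Finset.sum_congr rfl fun i _ => by ring
  have hSrep : ∀ l, (bB l : L) =
      ∑ i, algebraMap (Polynomial 𝕜) K (S i l) • (a0L * (bI i : L)) := by
    intro l
    rw [hSrepL l]
    exact Finset.sum_congr rfl fun i _ => by
      rw [Algebra.smul_def, ← IsScalarTower.algebraMap_apply]
  have hSmat : cK.toMatrix bBK = S.map (algebraMap (Polynomial 𝕜) K) := by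
    ext i l
    rw [Module.Basis.toMatrix_apply, Matrix.map_apply, hbBK]
    have h1 : (bB l : L) = ∑ i, algebraMap (Polynomial 𝕜) K (S i l) • cK i := by
      simp only [hcK]; exact hSrep l
    rw [h1, hrepr]
  -- determinant relation
  have hmatmul : (S.map (algebraMap (Polynomial 𝕜) K)) * (TB.map (algebraMap (Polynomial 𝕜) K))
      = TI.map (algebraMap (Polynomial 𝕜) K) := by
    rw [← hSmat, ← hTBmat, Module.Basis.toMatrix_mul_toMatrix, hTImat]
  have hdet : TI.det = S.det * TB.det := by
    apply hinjAK
    rw [map_mul, RingHom.map_det, RingHom.map_det, RingHom.map_det, RingHom.mapMatrix_apply,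
      RingHom.mapMatrix_apply, RingHom.mapMatrix_apply, ← Matrix.det_mul, hmatmul]
  have hTIunit : IsUnit ((TI.map (algebraMap (Polynomial 𝕜) K)).det) := by
    rw [← hTImat]
    refine IsUnit.of_mul_eq_one (pbB.toMatrix cK).det ?_
    rw [← Matrix.det_mul, Module.Basis.toMatrix_mul_toMatrix, Module.Basis.toMatrix_self, Matrix.det_one]
  have hTBunit : IsUnit ((TB.map (algebraMap (Polynomial 𝕜) K)).det) := by
    rw [← hTBmat]
    refine IsUnit.of_mul_eq_one (pbB.toMatrix bBK).det ?_
    rw [← Matrix.det_mul, Module.Basis.toMatrix_mul_toMatrix, Module.Basis.toMatrix_self, Matrix.det_one]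
  have hTIdet0 : TI.det ≠ 0 := by
    intro h
    rw [← RingHom.mapMatrix_apply, ← RingHom.map_det, h, map_zero] at hTIunit
    exact not_isUnit_zero hTIunit
  have hTBdet0 : TB.det ≠ 0 := by
    intro h
    rw [← RingHom.mapMatrix_apply, ← RingHom.map_det, h, map_zero] at hTBunit
    exact not_isUnit_zero hTBunit
  have hSdet0 : S.det ≠ 0 := fun h => hTIdet0 (by rw [hdet, h, zero_mul])
  have hsize : polySize TI.det = S.det.natDegree + polySize TB.det := by
    rw [polySize_eq_natDegree hTIdet0, polySize_eq_natDegree hTBdet0, hdet,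
      Polynomial.natDegree_mul hSdet0 hTBdet0]
  refine ⟨by rw [hsize]; exact Nat.le_add_left _ _, ?_, ?_⟩
  · -- equality → ∃ α
    intro heq
    have hSdeg : S.det.natDegree = 0 := by omega
    have hSunit : IsUnit S.det := by
      obtain ⟨c0, hc0⟩ := Polynomial.natDegree_eq_zero.mp hSdeg
      rw [← hc0]
      exact Polynomial.isUnit_C.mpr (isUnit_iff_ne_zero.mpr
        (fun h => hSdet0 (by rw [← hc0, h, map_zero])))
    have hW := Matrix.mul_nonsing_inv S hSunit
    have hctB : ∀ j : Fin d, a0L * (bI j : L) ∈ integralClosure (Polynomial 𝕜) L := by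
      intro j
      have key : ∑ l, algebraMap (Polynomial 𝕜) L (S⁻¹ l j) * (bB l : L)
          = a0L * (bI j : L) := by
        calc ∑ l, algebraMap (Polynomial 𝕜) L (S⁻¹ l j) * (bB l : L)
            = ∑ l, ∑ i, algebraMap (Polynomial 𝕜) L (S⁻¹ l j) *
                (algebraMap (Polynomial 𝕜) L (S i l) * (a0L * (bI i : L))) := by
              refine Finset.sum_congr rfl fun l _ => ?_
              rw [hSrepL l, Finset.mul_sum]
          _ = ∑ i, algebraMap (Polynomial 𝕜) L ((S * S⁻¹) i j) * (a0L * (bI i : L)) := by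
              rw [Finset.sum_comm]
              refine Finset.sum_congr rfl fun i _ => ?_
              rw [Matrix.mul_apply, map_sum, Finset.sum_mul]
              refine Finset.sum_congr rfl fun l _ => ?_
              rw [map_mul]; ring
          _ = a0L * (bI j : L) := by
              rw [hW]
              rw [Finset.sum_eq_single j]
              · rw [Matrix.one_apply_eq, map_one, one_mul]
              · intro i _ hij
                rw [Matrix.one_apply_ne hij, map_zero, zero_mul]
              · intro h; exact absurd (Finset.mem_univ j) h
      rw [← key]
      exact sum_mem fun l _ => mul_mem
        ((integralClosure (Polynomial 𝕜) L).algebraMap_mem _) (bB l).2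
    refine ⟨(a i0)⁻¹, inv_ne_zero (ha i0), fun x => ⟨fun hx => ?_, ?_⟩⟩
    · refine ⟨a0L * x, ?_, ?_⟩
      · have hx1 : a0L * x = ∑ i, algebraMap (Polynomial 𝕜) L ((bI.repr ⟨x, hx⟩) i) *
            (a0L * (bI i : L)) := by
          conv_lhs => rw [hITrep x hx]
          rw [Finset.mul_sum]
          exact Finset.sum_congr rfl fun i _ => by ring
        rw [hx1]
        exact sum_mem fun i _ => mul_mem
          ((integralClosure (Polynomial 𝕜) L).algebraMap_mem _) (hctB i)
      · rw [map_inv₀, ← ha0L, ← mul_assoc, inv_mul_cancel₀ ha0L0, one_mul]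
    · rintro ⟨y, hy, rfl⟩
      have h1 := hImem ⟨y, hy⟩
      have h2 : algebraMap K L (a i0)⁻¹ * y = (y : L) * a0L⁻¹ := by
        rw [map_inv₀, ← ha0L]; ring
      rwa [h2]
  · -- ∃ α → equality
    rintro ⟨α, hα0, hα⟩
    suffices hSdeg : S.det.natDegree = 0 by omega
    -- α·1 ∈ I
    have hαI : algebraMap K L α ∈ I := by
      rw [hα]
      exact ⟨1, Subalgebra.one_mem _, (mul_one _).symm⟩
    set q : Fin d → Polynomial 𝕜 := fun i => bI.repr ⟨algebraMap K L α, hαI⟩ i with hqdef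
    have hqrep : algebraMap K L α = ∑ i, algebraMap (Polynomial 𝕜) L (q i) * (bI i : L) :=
      hITrep _ hαI
    set qq : Fin d → K := fun i => algebraMap (Polynomial 𝕜) K (q i) / a i with hqqdef
    set c : Fin d → Fin d → K :=
      fun i k => ((g i).map (algebraMap (Polynomial 𝕜) K)).coeff (k : ℕ) with hcdef
    have hgKdeg : ∀ i : Fin d, ((g i).map (algebraMap (Polynomial 𝕜) K)).natDegree = (i : ℕ) :=
      fun i => by rw [(hgmonic i).natDegree_map, hgdeg]
    have hgKmonic : ∀ i : Fin d, ((g i).map (algebraMap (Polynomial 𝕜) K)).Monic :=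
      fun i => (hgmonic i).map _
    have hbIθ : ∀ i : Fin d, a i • (bI i : L) = ∑ k : Fin d, c i k • θ ^ (k : ℕ) := by
      intro i
      have hai : algebraMap K L (a i) ≠ 0 := fun h => ha i (hinjKL (by rw [h, map_zero]))
      have hcan : algebraMap K L (a i) * (aeval θ (g i) / algebraMap K L (a i))
          = aeval θ (g i) := by field_simp
      rw [hbI i, Algebra.smul_def, hcan]
      have h2 : aeval θ ((g i).map (algebraMap (Polynomial 𝕜) K)) = ∑ k ∈ Finset.range d,
          ((g i).map (algebraMap (Polynomial 𝕜) K)).coeff k • θ ^ k :=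
        aeval_eq_sum_range' (by rw [hgKdeg]; exact i.isLt) θ
      rw [← aeval_map_algebraMap K, h2, ← Fin.sum_univ_eq_sum_range]
    have hi0v : (i0 : ℕ) = 0 := rfl
    have hmaster : (fun k => ∑ i, qq i * c i k) = (fun k : Fin d => if k = i0 then α else 0) := by
      apply huniq
      have hL : ∑ k, (∑ i, qq i * c i k) • θ ^ (k : ℕ) = algebraMap K L α := by
        calc ∑ k, (∑ i, qq i * c i k) • θ ^ (k : ℕ)
            = ∑ k, ∑ i, qq i • (c i k • θ ^ (k : ℕ)) := by
              refine Finset.sum_congr rfl fun k _ => ?_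
              rw [Finset.sum_smul]
              exact Finset.sum_congr rfl fun i _ => by rw [mul_smul]
          _ = ∑ i, qq i • (∑ k, c i k • θ ^ (k : ℕ)) := by
              rw [Finset.sum_comm]
              exact Finset.sum_congr rfl fun i _ => (Finset.smul_sum).symm
          _ = ∑ i, qq i • (a i • (bI i : L)) := by
              exact Finset.sum_congr rfl fun i _ => by rw [hbIθ i]
          _ = ∑ i, algebraMap (Polynomial 𝕜) L (q i) * (bI i : L) := by
              refine Finset.sum_congr rfl fun i _ => ?_
              rw [smul_smul]
              have hqa : qq i * a i = algebraMap (Polynomial 𝕜) K (q i) := by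
                simp only [hqqdef]
                exact div_mul_cancel₀ _ (ha i)
              rw [hqa, Algebra.smul_def, ← IsScalarTower.algebraMap_apply]
          _ = algebraMap K L α := hqrep.symm
      have hR : ∑ k : Fin d, (if k = i0 then α else (0 : K)) • θ ^ (k : ℕ)
          = algebraMap K L α := by
        rw [Finset.sum_eq_single i0]
        · rw [if_pos rfl, hi0v, pow_zero, Algebra.algebraMap_eq_smul_one]
        · intro k _ hk; rw [if_neg hk, zero_smul]
        · intro h; exact absurd (Finset.mem_univ i0) h
      rw [hL, hR]
    have hcz : ∀ i k : Fin d, (i : ℕ) < (k : ℕ) → c i k = 0 := by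
      intro i k h
      simp only [hcdef]
      exact Polynomial.coeff_eq_zero_of_natDegree_lt (by rw [hgKdeg]; exact h)
    have hcdiag : ∀ i : Fin d, c i i = 1 := by
      intro i
      simp only [hcdef]
      have h := (hgKmonic i).coeff_natDegree
      rwa [hgKdeg i] at h
    have hq0' : ∀ n : ℕ, ∀ k : Fin d, d ≤ (k : ℕ) + n → 1 ≤ (k : ℕ) → qq k = 0 := by
      intro n
      induction n with
      | zero => intro k hk _; exact absurd k.isLt (by omega)
      | succ n ih =>
        intro k hk hk1
        have hek := congrFun hmaster k
        have hki0 : ¬(k = i0) := fun h => by rw [h, hi0v] at hk1; omega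
        rw [if_neg hki0] at hek
        rw [Finset.sum_eq_single k] at hek
        · rwa [hcdiag, mul_one] at hek
        · intro i _ hik
          rcases lt_or_gt_of_ne (fun h : (i : ℕ) = (k : ℕ) => hik (Fin.ext h)) with h | h
          · rw [hcz i k h, mul_zero]
          · rw [ih i (by omega) (by omega), zero_mul]
        · intro h; exact absurd (Finset.mem_univ k) h
    have hq0 : ∀ k : Fin d, 1 ≤ (k : ℕ) → qq k = 0 := fun k hk => hq0' d k (by omega) hk
    have hqα : qq i0 = α := by
      have hek := congrFun hmaster i0
      simp only at hek
      rw [Finset.sum_eq_single i0] at hek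
      · rwa [hcdiag, mul_one] at hek
      · intro i _ hi
        have hi1 : 1 ≤ (i : ℕ) := by
          rcases Nat.eq_zero_or_pos (i : ℕ) with h | h
          · exact absurd (Fin.ext (by rw [h, hi0v])) hi
          · exact h
        rw [hq0 i hi1, zero_mul]
      · intro h; exact absurd (Finset.mem_univ i0) h
    have hp0 : algebraMap (Polynomial 𝕜) K (q i0) = a i0 * α := by
      have h1 : algebraMap (Polynomial 𝕜) K (q i0) / a i0 = α := by
        have := hqα; simp only [hqqdef] at this; exact this
      rw [div_eq_iff (ha i0)] at h1
      rw [h1]; ring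
    have hctB : ∀ j : Fin d, a0L * (bI j : L) ∈ integralClosure (Polynomial 𝕜) L := by
      intro j
      obtain ⟨y, hy, hyeq⟩ := (hα (bI j : L)).mp (hbImem j)
      have heq : a0L * (bI j : L) = algebraMap (Polynomial 𝕜) L (q i0) * y := by
        rw [hyeq, ha0L, ← mul_assoc, ← map_mul, ← hp0,
          IsScalarTower.algebraMap_apply (Polynomial 𝕜) K L]
      rw [heq]
      exact mul_mem ((integralClosure (Polynomial 𝕜) L).algebraMap_mem _) hy
    set R : Matrix (Fin d) (Fin d) (Polynomial 𝕜) :=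
      fun l j => bB.repr ⟨a0L * (bI j : L), hctB j⟩ l with hRdef
    have hBrep : ∀ (x : L) (hx : x ∈ integralClosure (Polynomial 𝕜) L),
        x = ∑ l, algebraMap (Polynomial 𝕜) L ((bB.repr ⟨x, hx⟩) l) * (bB l : L) := by
      intro x hx
      conv_lhs => rw [show x = ((⟨x, hx⟩ : ↥(integralClosure (Polynomial 𝕜) L)) : L) from rfl,
        ← bB.sum_repr ⟨x, hx⟩]
      push_cast [AddSubmonoidClass.coe_finset_sum]
      exact Finset.sum_congr rfl fun l _ => by rw [Algebra.smul_def]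
    have hRrep : ∀ j, a0L * (bI j : L)
        = ∑ l, algebraMap (Polynomial 𝕜) K (R l j) • (bB l : L) := by
      intro j
      conv_lhs => rw [hBrep _ (hctB j)]
      exact Finset.sum_congr rfl fun l _ => by
        rw [Algebra.smul_def, ← IsScalarTower.algebraMap_apply]
    have hRmat : bBK.toMatrix cK = R.map (algebraMap (Polynomial 𝕜) K) := by
      ext l j
      rw [Module.Basis.toMatrix_apply, Matrix.map_apply, hcK]
      have h1 : a0L * (bI j : L) = ∑ m, algebraMap (Polynomial 𝕜) K (R m j) • bBK m := by
        simp only [hbBK]; exact hRrep j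
      rw [h1, hrepr]
    have hSR : S.det * R.det = 1 := by
      apply hinjAK
      rw [map_mul, map_one, RingHom.map_det, RingHom.map_det, RingHom.mapMatrix_apply,
        RingHom.mapMatrix_apply, ← Matrix.det_mul, ← hSmat, ← hRmat,
        Module.Basis.toMatrix_mul_toMatrix, Module.Basis.toMatrix_self, Matrix.det_one]
    exact Polynomial.natDegree_eq_zero_of_isUnit (IsUnit.of_mul_eq_one _ hSR)
end

section
/- Let f, g ∈ O_p[x] be monic separable polynomials of degree d with g ≡ f (mod p²). Then ind_p(f) = 0 if and only if ind_p(g) = 0. In other words, whether p divides the index of f depends only on f modulo p². -/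
open Polynomial

/-- `v` is the `p`-adic valuation on `O` (characterised on nonzero elements). -/
def IsAdicVal {O : Type*} [CommRing O] (p : O) (v : O → ℕ) : Prop :=
  ∀ a : O, a ≠ 0 → p ^ v a ∣ a ∧ ¬ p ^ (v a + 1) ∣ a


namespace St16

variable {O : Type*} [CommRing O] [IsDomain O] [IsDiscreteValuationRing O]

/-- the radical of `(p)` in `O[x]/(h)`. -/
noncomputable def Jrad (p : O) (h : O[X]) : Ideal (AdjoinRoot h) :=
  (Ideal.span {algebraMap O (AdjoinRoot h) p}).radical

/-- The order `O[x]/(h)` is "bad at `p`" if there is `u ∉ (p)` with `u·J ⊆ p·J`,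
where `J` is the radical of `(p)`. This happens iff the order is not maximal. -/
def Bad (p : O) (h : O[X]) : Prop :=
  ∃ u : AdjoinRoot h, (¬ ∃ w, u = p • w) ∧
    ∀ j ∈ Jrad p h, ∃ j', j' ∈ Jrad p h ∧ u * j = p • j'

lemma p_mem_Jrad (p : O) (h : O[X]) : algebraMap O (AdjoinRoot h) p ∈ Jrad p h :=
  Ideal.le_radical (Ideal.subset_span rfl)

lemma smul_mem_Jrad (p : O) (h : O[X]) (x : AdjoinRoot h) : p • x ∈ Jrad p h := by
  have : p • x = algebraMap O (AdjoinRoot h) p * x := Algebra.smul_def p x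
  rw [this]
  exact Ideal.mul_mem_right _ _ (p_mem_Jrad p h)

/-- the power basis of `AdjoinRoot h`, reindexed by `Fin d`. -/
noncomputable def bR {d : ℕ} (h : O[X]) (hh : h.Monic) (hhdeg : h.natDegree = d) :
    Module.Basis (Fin d) O (AdjoinRoot h) :=
  (AdjoinRoot.powerBasis' hh).basis.reindex (finCongr (by simpa using hhdeg))

lemma bR_apply {d : ℕ} (h : O[X]) (hh : h.Monic) (hhdeg : h.natDegree = d) (k : Fin d) :
    bR h hh hhdeg k = AdjoinRoot.root h ^ (k : ℕ) := by
  rw [bR, Module.Basis.reindex_apply, PowerBasis.basis_eq_pow]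
  simp [AdjoinRoot.powerBasis', finCongr_symm, finCongr_apply, Fin.val_cast]
  rfl

end St16

namespace St16
set_option linter.unusedSectionVars false

variable {O : Type*} [CommRing O] [IsDomain O] [IsDiscreteValuationRing O]

lemma mk_eq_sum {d : ℕ} (hd : 0 < d) (h : O[X]) (hh : h.Monic) (hhdeg : h.natDegree = d)
    (P : O[X]) :
    AdjoinRoot.mk h P = ∑ k : Fin d, (P %ₘ h).coeff k • AdjoinRoot.root h ^ (k : ℕ) := by
  have hne1 : h ≠ 1 := by
    intro e
    rw [e, natDegree_one] at hhdeg; omega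
  have hlt : (P %ₘ h).natDegree < d := hhdeg ▸ natDegree_modByMonic_lt P hh hne1
  have h1 : AdjoinRoot.mk h P = AdjoinRoot.mk h (P %ₘ h) := by
    rw [AdjoinRoot.mk_eq_mk, modByMonic_eq_sub_mul_div _ h]
    exact ⟨P /ₘ h, by ring⟩
  rw [h1]
  conv_lhs => rw [(P %ₘ h).as_sum_range' d hlt]
  rw [map_sum]
  have hmon : ∀ i : ℕ, AdjoinRoot.mk h ((monomial i) ((P %ₘ h).coeff i))
      = (P %ₘ h).coeff i • AdjoinRoot.root h ^ i := by
    intro i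
    rw [← C_mul_X_pow_eq_monomial, map_mul, map_pow, AdjoinRoot.mk_C, AdjoinRoot.mk_X,
      Algebra.smul_def, AdjoinRoot.algebraMap_eq]
  simp_rw [hmon]
  exact (Fin.sum_univ_eq_sum_range (fun i => (P %ₘ h).coeff i • AdjoinRoot.root h ^ i) d).symm

section Transfer

variable {p : O} {d : ℕ} (hd : 0 < d) (f g : O[X])
  (hf : f.Monic) (hfdeg : f.natDegree = d) (hg : g.Monic) (hgdeg : g.natDegree = d)

include hd

/-- the `O`-module equivalence `O[x]/(f) ≃ O[x]/(g)` matching power bases. -/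
noncomputable def φeq : AdjoinRoot f ≃ₗ[O] AdjoinRoot g :=
  (bR f hf hfdeg).equiv (bR g hg hgdeg) (Equiv.refl _)

lemma φeq_basis (k : Fin d) :
    φeq f g hf hfdeg hg hgdeg (AdjoinRoot.root f ^ (k : ℕ)) = AdjoinRoot.root g ^ (k : ℕ) := by
  rw [← bR_apply f hf hfdeg k, ← bR_apply g hg hgdeg k, φeq, Module.Basis.equiv_apply, Equiv.refl_apply]

lemma φeq_mk (P : O[X]) :
    φeq f g hf hfdeg hg hgdeg (AdjoinRoot.mk f P) = AdjoinRoot.mk g (P %ₘ f) := by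
  have hne1 : f ≠ 1 := by intro e; rw [e, natDegree_one] at hfdeg; omega
  have hlt : (P %ₘ f).natDegree < d := hfdeg ▸ natDegree_modByMonic_lt P hf hne1
  rw [mk_eq_sum hd f hf hfdeg P, map_sum]
  rw [mk_eq_sum hd g hg hgdeg (P %ₘ f)]
  have hself : (P %ₘ f) %ₘ g = P %ₘ f := by
    rw [modByMonic_eq_self_iff hg]
    have hdeg : g.degree = (d : WithBot ℕ) := by
      rw [degree_eq_natDegree hg.ne_zero, hgdeg]
    rw [hdeg]
    calc (P %ₘ f).degree ≤ ((P %ₘ f).natDegree : WithBot ℕ) := degree_le_natDegree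
      _ < (d : WithBot ℕ) := by exact_mod_cast hlt
  rw [hself]
  congr 1; funext k
  rw [map_smul, φeq_basis hd f g hf hfdeg hg hgdeg k]

lemma φeq_symm_φeq (x : AdjoinRoot f) :
    φeq g f hg hgdeg hf hfdeg (φeq f g hf hfdeg hg hgdeg x) = x := by
  have : ((φeq g f hg hgdeg hf hfdeg).toLinearMap.comp
      (φeq f g hf hfdeg hg hgdeg).toLinearMap) = LinearMap.id := by
    apply (bR f hf hfdeg).ext
    intro k
    simp only [LinearMap.coe_comp, Function.comp_apply, LinearEquiv.coe_coe, LinearMap.id_coe,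
      id_eq]
    rw [bR_apply, φeq_basis hd, φeq_basis hd, ← bR_apply f hf hfdeg k]
  exact DFunLike.congr_fun this x

end Transfer

end St16

namespace St16
set_option linter.unusedSectionVars false

variable {O : Type*} [CommRing O] [IsDomain O] [IsDiscreteValuationRing O]

section Transfer2

variable {p : O} {d : ℕ} (hd : 0 < d) (f g : O[X])
  (hf : f.Monic) (hfdeg : f.natDegree = d) (hg : g.Monic) (hgdeg : g.natDegree = d)

include hd hf hfdeg hg hgdeg

lemma φeq_one : φeq f g hf hfdeg hg hgdeg 1 = 1 := by
  have h0 := φeq_basis hd f g hf hfdeg hg hgdeg ⟨0, hd⟩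
  simpa using h0

lemma φeq_mul (hcong : ∀ k, p ^ 2 ∣ (g - f).coeff k) (x y : AdjoinRoot f) :
    ∃ r, φeq f g hf hfdeg hg hgdeg (x * y)
      = φeq f g hf hfdeg hg hgdeg x * φeq f g hf hfdeg hg hgdeg y + (p ^ 2) • r := by
  obtain ⟨P, rfl⟩ := AdjoinRoot.mk_surjective x
  obtain ⟨Q, rfl⟩ := AdjoinRoot.mk_surjective y
  obtain ⟨E', hE'⟩ : C (p ^ 2) ∣ (g - f) := (C_dvd_iff_dvd_coeff _ _).mpr hcong
  have hP : AdjoinRoot.mk f P = AdjoinRoot.mk f (P %ₘ f) := by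
    rw [AdjoinRoot.mk_eq_mk, modByMonic_eq_sub_mul_div _ f]; exact ⟨P /ₘ f, by ring⟩
  have hQ : AdjoinRoot.mk f Q = AdjoinRoot.mk f (Q %ₘ f) := by
    rw [AdjoinRoot.mk_eq_mk, modByMonic_eq_sub_mul_div _ f]; exact ⟨Q /ₘ f, by ring⟩
  have hmul : AdjoinRoot.mk f P * AdjoinRoot.mk f Q
      = AdjoinRoot.mk f ((P %ₘ f) * (Q %ₘ f)) := by rw [hP, hQ, map_mul]
  refine ⟨AdjoinRoot.mk g (E' * (((P %ₘ f) * (Q %ₘ f)) /ₘ f)), ?_⟩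
  rw [hmul, φeq_mk hd f g hf hfdeg hg hgdeg ((P %ₘ f) * (Q %ₘ f)),
    φeq_mk hd f g hf hfdeg hg hgdeg P, φeq_mk hd f g hf hfdeg hg hgdeg Q, ← map_mul]
  have hfE : AdjoinRoot.mk g (f * (((P %ₘ f) * (Q %ₘ f)) /ₘ f))
      = - ((p ^ 2) • AdjoinRoot.mk g (E' * (((P %ₘ f) * (Q %ₘ f)) /ₘ f))) := by
    have hsplit : f * (((P %ₘ f) * (Q %ₘ f)) /ₘ f)
        = g * (((P %ₘ f) * (Q %ₘ f)) /ₘ f) - C (p ^ 2) * (E' * (((P %ₘ f) * (Q %ₘ f)) /ₘ f)) := by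
      linear_combination (-(((P %ₘ f) * (Q %ₘ f)) /ₘ f)) * hE'
    rw [hsplit, map_sub, map_mul, AdjoinRoot.mk_self, zero_mul, zero_sub, map_mul,
      AdjoinRoot.mk_C, Algebra.smul_def, AdjoinRoot.algebraMap_eq]
  have hrem : ((P %ₘ f) * (Q %ₘ f)) %ₘ f
      = (P %ₘ f) * (Q %ₘ f) - f * (((P %ₘ f) * (Q %ₘ f)) /ₘ f) :=
    modByMonic_eq_sub_mul_div _ f
  rw [hrem, map_sub, hfE]
  ring

lemma φeq_pow (hcong : ∀ k, p ^ 2 ∣ (g - f).coeff k) (x : AdjoinRoot f) (n : ℕ) :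
    ∃ r, φeq f g hf hfdeg hg hgdeg (x ^ n) = (φeq f g hf hfdeg hg hgdeg x) ^ n + (p ^ 2) • r := by
  induction n with
  | zero => exact ⟨0, by simp [φeq_one hd f g hf hfdeg hg hgdeg]⟩
  | succ n ih =>
      obtain ⟨s, hs⟩ := ih
      obtain ⟨r₁, hr₁⟩ := φeq_mul hd f g hf hfdeg hg hgdeg hcong x (x ^ n)
      refine ⟨φeq f g hf hfdeg hg hgdeg x * s + r₁, ?_⟩
      rw [pow_succ' x n, hr₁, hs, mul_add, mul_smul_comm, smul_add,
        pow_succ' (φeq f g hf hfdeg hg hgdeg x) n]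
      abel

lemma φeq_Jrad (hcong : ∀ k, p ^ 2 ∣ (g - f).coeff k) (x : AdjoinRoot f)
    (hx : x ∈ Jrad p f) : φeq f g hf hfdeg hg hgdeg x ∈ Jrad p g := by
  obtain ⟨n, hn⟩ := Ideal.mem_radical_iff.mp hx
  rw [Ideal.mem_span_singleton'] at hn
  obtain ⟨r, hr⟩ := hn
  obtain ⟨s, hs⟩ := φeq_pow hd f g hf hfdeg hg hgdeg hcong x n
  have hxn : x ^ n = p • r := by rw [← hr, mul_comm, ← Algebra.smul_def]
  have hφn : (φeq f g hf hfdeg hg hgdeg x) ^ n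
      = p • (φeq f g hf hfdeg hg hgdeg r - p • s) := by
    have h1 : (φeq f g hf hfdeg hg hgdeg x) ^ n
        = φeq f g hf hfdeg hg hgdeg (x ^ n) - (p ^ 2) • s := by rw [hs]; abel
    rw [h1, hxn, map_smul, smul_sub, smul_smul, ← pow_two]
  refine Ideal.mem_radical_iff.mpr ⟨n, ?_⟩
  rw [hφn]
  exact Ideal.mem_span_singleton'.mpr ⟨_, by rw [mul_comm, ← Algebra.smul_def]⟩

lemma bad_transfer (hcong : ∀ k, p ^ 2 ∣ (g - f).coeff k) (hbad : Bad p g) : Bad p f := by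
  have hcong' : ∀ k, p ^ 2 ∣ (f - g).coeff k := by
    intro k
    have : (f - g).coeff k = -((g - f).coeff k) := by
      rw [← coeff_neg, neg_sub]
    rw [this]
    exact (hcong k).neg_right
  obtain ⟨u, hu1, hu2⟩ := hbad
  have hφψ : ∀ x : AdjoinRoot g,
      φeq f g hf hfdeg hg hgdeg (φeq g f hg hgdeg hf hfdeg x) = x :=
    φeq_symm_φeq hd g f hg hgdeg hf hfdeg
  have hψφ : ∀ x : AdjoinRoot f,
      φeq g f hg hgdeg hf hfdeg (φeq f g hf hfdeg hg hgdeg x) = x :=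
    φeq_symm_φeq hd f g hf hfdeg hg hgdeg
  refine ⟨φeq g f hg hgdeg hf hfdeg u, ?_, ?_⟩
  · rintro ⟨w, hw⟩
    apply hu1
    refine ⟨φeq f g hf hfdeg hg hgdeg w, ?_⟩
    have h1 := congrArg (φeq f g hf hfdeg hg hgdeg) hw
    rw [map_smul, hφψ u] at h1
    exact h1
  · intro j hj
    obtain ⟨r, hr⟩ := φeq_mul hd f g hf hfdeg hg hgdeg hcong (φeq g f hg hgdeg hf hfdeg u) j
    have hφj : φeq f g hf hfdeg hg hgdeg j ∈ Jrad p g :=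
      φeq_Jrad hd f g hf hfdeg hg hgdeg hcong j hj
    obtain ⟨j2, hj2, hj2e⟩ := hu2 (φeq f g hf hfdeg hg hgdeg j) hφj
    have hkey : φeq f g hf hfdeg hg hgdeg (φeq g f hg hgdeg hf hfdeg u * j)
        = p • (j2 + p • r) := by
      rw [hr, hφψ u, hj2e, smul_add, smul_smul, ← pow_two]
    have hmem : j2 + p • r ∈ Jrad p g := Ideal.add_mem _ hj2 (smul_mem_Jrad p g r)
    refine ⟨φeq g f hg hgdeg hf hfdeg (j2 + p • r),
      φeq_Jrad hd g f hg hgdeg hf hfdeg hcong' _ hmem, ?_⟩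
    have h2 := congrArg (φeq g f hg hgdeg hf hfdeg) hkey
    rw [map_smul, hψφ] at h2
    exact h2

end Transfer2

end St16

namespace St16
set_option linter.unusedSectionVars false
set_option maxHeartbeats 1000000

section Side

variable {O : Type*} [CommRing O] [IsDomain O] [IsDiscreteValuationRing O]
variable {p : O} (hp : Irreducible p)
variable {K : Type*} [Field K] [Algebra O K] [IsFractionRing O K]
variable {d : ℕ} (hd : 0 < d)
variable {C : Type*} [CommRing C] [Algebra K C] [Algebra O C] [IsScalarTower O K C]
variable (h : O[X]) (hh : h.Monic) (hhdeg : h.natDegree = d)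
variable (ϑ : C) (hϑ : aeval ϑ (h.map (algebraMap O K)) = 0)
variable (bC : Module.Basis (Fin d) K C) (hbC : ∀ k : Fin d, bC k = ϑ ^ (k : ℕ))
variable (bO : Module.Basis (Fin d) O ↥(integralClosure O C))
variable (T : Matrix (Fin d) (Fin d) O)
variable (hT : ∀ k : Fin d, ϑ ^ (k : ℕ) = ∑ l, algebraMap O C (T l k) * (bO l : C))

include hϑ in
lemma aeval_root : aeval ϑ h = 0 := by
  rwa [Polynomial.aeval_map_algebraMap] at hϑ

/-- the canonical map `O[x]/(h) → C` sending the class of `x` to `ϑ`. -/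
noncomputable def πmap : AdjoinRoot h →ₐ[O] C :=
  AdjoinRoot.liftAlgHom h (Algebra.ofId O C) ϑ (by have := aeval_root h ϑ hϑ; rw [aeval_def] at this; exact this)

lemma πmap_pow (k : ℕ) : πmap h ϑ hϑ (AdjoinRoot.root h ^ k) = ϑ ^ k := by
  rw [map_pow, πmap]
  congr 1
  exact AdjoinRoot.liftAlgHom_root _ _ _ _

include hp K in
lemma punitC : IsUnit (algebraMap O C p) := by
  rw [IsScalarTower.algebraMap_apply O K C]
  exact (isUnit_iff_ne_zero.mpr ((map_ne_zero_iff _ (IsFractionRing.injective O K)).mpr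
    hp.ne_zero)).map (algebraMap K C)

include hp K in
lemma smul_cancelC (x y : C) (hxy : p • x = p • y) : x = y := by
  have h1 : algebraMap O C p * x = algebraMap O C p * y := by
    rw [← Algebra.smul_def, ← Algebra.smul_def]; exact hxy
  exact (punitC hp (K := K) (C := C)).mul_left_cancel h1

include hT in
lemma hTs (k : Fin d) : ϑ ^ (k : ℕ) = ∑ l, T l k • (bO l : C) := by
  rw [hT k]
  exact Finset.sum_congr rfl fun l _ => (Algebra.smul_def _ _).symm

include K hbC in
lemma pow_linearIndependent : LinearIndependent O (fun k : Fin d => ϑ ^ (k : ℕ)) := by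
  have hcoe : (fun k : Fin d => ϑ ^ (k : ℕ)) = ⇑bC := by
    funext k; exact (hbC k).symm
  rw [hcoe]
  refine bC.linearIndependent.restrict_scalars ?_
  intro a b hab
  refine IsFractionRing.injective O K (?_ : algebraMap O K a = algebraMap O K b)
  rw [Algebra.algebraMap_eq_smul_one, Algebra.algebraMap_eq_smul_one]
  exact hab

include hd hh hhdeg hbC in
lemma πmap_inj : Function.Injective (πmap h ϑ hϑ) := by
  rw [injective_iff_map_eq_zero]
  intro a ha
  have hrep := (bR h hh hhdeg).sum_repr a
  have h2 : πmap h ϑ hϑ a = ∑ k : Fin d, ((bR h hh hhdeg).repr a k) • ϑ ^ (k : ℕ) := by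
    conv_lhs => rw [← hrep]
    rw [map_sum]
    refine Finset.sum_congr rfl fun k _ => ?_
    rw [map_smul, bR_apply, πmap_pow]
  rw [ha] at h2
  have h3 := Fintype.linearIndependent_iff.mp (pow_linearIndependent ϑ bC hbC)
    (fun k => (bR h hh hhdeg).repr a k) h2.symm
  rw [← hrep]
  simp [h3]

include hh hhdeg in
lemma range_isIntegral (w : AdjoinRoot h) : IsIntegral O (πmap h ϑ hϑ w) := by
  haveI : Module.Finite O (AdjoinRoot h) := Module.Finite.of_basis (bR h hh hhdeg)
  exact ((Algebra.IsIntegral.of_finite O (AdjoinRoot h)).isIntegral w).map (πmap h ϑ hϑ)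

lemma intcl_repr (z : C) (hz : IsIntegral O z) :
    z = ∑ m, (bO.repr ⟨z, hz⟩ m) • (bO m : C) := by
  have hrep := bO.sum_repr ⟨z, hz⟩
  have h1 := congrArg (Subtype.val) hrep
  simp only [AddSubmonoidClass.coe_finset_sum, SetLike.val_smul] at h1; exact h1.symm

include hT in
lemma det_smul_mem (m : Fin d) :
    ∃ w, πmap h ϑ hϑ w = T.det • (bO m : C) := by
  refine ⟨∑ k, (T.transpose.adjugate) m k • AdjoinRoot.root h ^ (k : ℕ), ?_⟩
  rw [map_sum]
  have hsm : ∀ k : Fin d, πmap h ϑ hϑ ((T.transpose.adjugate) m k • AdjoinRoot.root h ^ (k : ℕ))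
      = (T.transpose.adjugate) m k • ϑ ^ (k : ℕ) := by
    intro k; rw [map_smul, πmap_pow]
  simp_rw [hsm]
  have h1 : ∀ k : Fin d, (T.transpose.adjugate) m k • ϑ ^ (k : ℕ)
      = ∑ l, ((T.transpose.adjugate) m k * T l k) • (bO l : C) := by
    intro k
    rw [hTs ϑ bO T hT k, Finset.smul_sum]
    exact Finset.sum_congr rfl fun l _ => by rw [smul_smul]
  simp_rw [h1]
  rw [Finset.sum_comm]
  have h2 : ∀ l : Fin d, (∑ k, ((T.transpose.adjugate) m k * T l k) • (bO l : C))
      = ((T.transpose.adjugate * T.transpose) m l) • (bO l : C) := by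
    intro l
    rw [← Finset.sum_smul, Matrix.mul_apply]
    congr 1
  simp_rw [h2, Matrix.adjugate_mul, Matrix.det_transpose]
  simp [Matrix.smul_apply, Matrix.one_apply, ite_smul]

include hT in
lemma unit_max (hu : IsUnit T.det) (z : C) (hz : IsIntegral O z) :
    ∃ w, πmap h ϑ hϑ w = z := by
  haveI := T.invertibleOfIsUnitDet hu
  have hbO : ∀ m, ∃ w, πmap h ϑ hϑ w = (bO m : C) := by
    intro m
    refine ⟨∑ k, ((⅟T) k m) • AdjoinRoot.root h ^ (k : ℕ), ?_⟩
    rw [map_sum]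
    have hsm : ∀ k : Fin d, πmap h ϑ hϑ ((⅟T) k m • AdjoinRoot.root h ^ (k : ℕ))
        = (⅟T) k m • ϑ ^ (k : ℕ) := fun k => by rw [map_smul, πmap_pow]
    simp_rw [hsm]
    have h1 : ∀ k : Fin d, (⅟T) k m • ϑ ^ (k : ℕ)
        = ∑ l, (T l k * (⅟T) k m) • (bO l : C) := by
      intro k
      rw [hTs ϑ bO T hT k, Finset.smul_sum]
      refine Finset.sum_congr rfl fun l _ => ?_
      rw [smul_smul, mul_comm]
    simp_rw [h1]
    rw [Finset.sum_comm]
    have h2 : ∀ l, (∑ k, (T l k * (⅟T) k m) • (bO l : C)) = ((T * ⅟T) l m) • (bO l : C) := by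
      intro l; rw [← Finset.sum_smul, Matrix.mul_apply]
    simp_rw [h2, mul_invOf_self]
    simp [Matrix.one_apply, ite_smul]
  choose w hw using hbO
  refine ⟨∑ m, (bO.repr ⟨z, hz⟩ m) • w m, ?_⟩
  rw [map_sum]
  conv_rhs => rw [intcl_repr bO z hz]
  refine Finset.sum_congr rfl fun m _ => ?_
  rw [map_smul, hw m]

include hd hh hhdeg hbC hT in
lemma max_unit (hmax : ∀ z : C, IsIntegral O z → ∃ w, πmap h ϑ hϑ w = z) : IsUnit T.det := by
  have hbOint : ∀ m : Fin d, IsIntegral O ((bO m : C)) :=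
    fun m => (mem_integralClosure_iff O C).mp (bO m).2
  choose w hw using fun m => hmax (bO m) (hbOint m)
  set S : Matrix (Fin d) (Fin d) O := fun k m => (bR h hh hhdeg).repr (w m) k with hS
  have hwm : ∀ m, (bO m : C) = ∑ k, S k m • ϑ ^ (k : ℕ) := by
    intro m
    rw [← hw m]
    conv_lhs => rw [← (bR h hh hhdeg).sum_repr (w m)]
    rw [map_sum]
    refine Finset.sum_congr rfl fun k _ => ?_
    rw [map_smul, bR_apply, πmap_pow]
  have hpow : ∀ j : Fin d, ϑ ^ (j : ℕ) = ∑ k, ((S * T) k j) • ϑ ^ (k : ℕ) := by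
    intro j
    rw [hTs ϑ bO T hT j]
    have h1 : ∀ l : Fin d, T l j • (bO l : C) = ∑ k, (S k l * T l j) • ϑ ^ (k : ℕ) := by
      intro l
      rw [hwm l, Finset.smul_sum]
      refine Finset.sum_congr rfl fun k _ => ?_
      rw [smul_smul, mul_comm]
    simp_rw [h1]
    rw [Finset.sum_comm]
    refine Finset.sum_congr rfl fun k _ => ?_
    rw [← Finset.sum_smul, Matrix.mul_apply]
  have hST : S * T = 1 := by
    ext k j
    have h1 : ∑ k, ((1 : Matrix (Fin d) (Fin d) O) k j) • ϑ ^ (k : ℕ) = ϑ ^ (j : ℕ) := by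
      simp [Matrix.one_apply, ite_smul]
    have h0 : ∑ k, ((S * T) k j - (1 : Matrix (Fin d) (Fin d) O) k j) • ϑ ^ (k : ℕ) = 0 := by
      simp_rw [sub_smul]
      rw [Finset.sum_sub_distrib, ← hpow j, h1, sub_self]
    have h3 := Fintype.linearIndependent_iff.mp (pow_linearIndependent ϑ bC hbC) _ h0
    exact sub_eq_zero.mp (h3 k)
  refine IsUnit.of_mul_eq_one (a := T.det) S.det ?_
  rw [mul_comm, ← Matrix.det_mul, hST, Matrix.det_one]

include hd hbC hT in
lemma det_ne_zero : T.det ≠ 0 := by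
  intro he
  have hfr : Module.finrank K C = d := by
    rw [Module.finrank_eq_card_basis bC, Fintype.card_fin]
  have hspan : ⊤ ≤ Submodule.span K (Set.range fun l : Fin d => (bO l : C)) := by
    rw [← bC.span_eq]
    refine Submodule.span_le.mpr ?_
    rintro _ ⟨k, rfl⟩
    rw [hbC k, hTs ϑ bO T hT k]
    refine Submodule.sum_mem _ fun l _ => ?_
    have : T l k • (bO l : C) = (algebraMap O K (T l k)) • (bO l : C) :=
      (algebraMap_smul K (T l k) ((bO l : C))).symm
    rw [this]
    exact Submodule.smul_mem _ _ (Submodule.subset_span ⟨l, rfl⟩)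
  have hcard : Fintype.card (Fin d) = Module.finrank K C := by rw [Fintype.card_fin, hfr]
  set bb := basisOfTopLeSpanOfCardEqFinrank _ hspan hcard with hbb
  have hcoe : ∀ l : Fin d, bb l = (bO l : C) := by
    intro l
    rw [hbb, coe_basisOfTopLeSpanOfCardEqFinrank]
  have hM : ∀ k, bC k = ∑ l, (T.map (algebraMap O K)) l k • bb l := by
    intro k
    rw [hbC k, hTs ϑ bO T hT k]
    refine Finset.sum_congr rfl fun l _ => ?_
    rw [hcoe l, Matrix.map_apply, algebraMap_smul]
  have hrepr : bb.toMatrix ⇑bC = T.map (algebraMap O K) := by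
    ext l k
    rw [Module.Basis.toMatrix_apply, hM k]
    rw [Module.Basis.repr_sum_self]
  have hun : IsUnit (bb.toMatrix ⇑bC).det := by
    rw [← Module.Basis.det_apply]
    exact bb.isUnit_det bC
  rw [hrepr, ← RingHom.mapMatrix_apply, ← RingHom.map_det, he, map_zero] at hun
  exact not_isUnit_zero hun

include hp hd hh hhdeg hϑ hbC hT in
lemma unit_not_bad (hu : IsUnit T.det) : ¬ Bad p h := by
  rintro ⟨u, hu1, hu2⟩
  haveI : Module.Finite O (AdjoinRoot h) := Module.Finite.of_basis (bR h hh hhdeg)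
  haveI : IsNoetherian O (AdjoinRoot h) := isNoetherian_of_isNoetherianRing_of_finite O _
  obtain ⟨pu, hpu⟩ := punitC hp (K := K) (C := C)
  set z : C := (↑pu⁻¹ : C) * πmap h ϑ hϑ u with hzdef
  set N : Submodule O C := Submodule.map ((πmap h ϑ hϑ).toLinearMap)
    (Submodule.restrictScalars O (Jrad p h)) with hNdef
  have hNfg : N.FG :=
    (IsNoetherian.noetherian (Submodule.restrictScalars O (Jrad p h))).map _
  haveI : Module.Finite O ↥N := Module.Finite.iff_fg.mpr hNfg
  have hstab : ∀ n ∈ N, z * n ∈ N := by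
    rintro _ ⟨j, hj, rfl⟩
    obtain ⟨j', hj', hje⟩ := hu2 j hj
    have hcalc : z * (πmap h ϑ hϑ) j = πmap h ϑ hϑ j' := by
      rw [hzdef, mul_assoc, ← map_mul, hje, map_smul, Algebra.smul_def, ← hpu,
        ← mul_assoc, Units.inv_mul, one_mul]
    rw [AlgHom.toLinearMap_apply, hcalc]
    exact ⟨j', hj', rfl⟩
  set φN : Module.End O ↥N := (LinearMap.mulLeft O z).restrict hstab with hφNdef
  have hφcoe : ∀ (x : ↥N), ((φN x : C)) = z * (x : C) := fun x => rfl
  have hφpow : ∀ (n : ℕ) (x : ↥N), (((φN ^ n) x : C)) = z ^ n * (x : C) := by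
    intro n
    induction n with
    | zero => intro x; simp
    | succ n ih =>
        intro x
        rw [pow_succ' φN n, Module.End.mul_apply, hφcoe, ih, ← mul_assoc, ← pow_succ']
  have hint : IsIntegral O φN := Algebra.IsIntegral.isIntegral φN
  obtain ⟨q, hqm, hq0⟩ := hint
  have hq0' : aeval φN q = 0 := by rwa [aeval_def]
  have heval : ∀ x : ↥N, (aeval z q) * (x : C) = 0 := by
    intro x
    have h1 : (aeval φN q) x = 0 := by rw [hq0']; rfl
    have h2 : (((aeval φN q) x : ↥N) : C) = q.sum fun n b => b • (z ^ n * (x : C)) := by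
      rw [Polynomial.aeval_endomorphism]
      rw [Polynomial.sum_def, Polynomial.sum_def, AddSubmonoidClass.coe_finset_sum]
      refine Finset.sum_congr rfl fun i _ => ?_
      rw [SetLike.val_smul, hφpow]
    have h3 : (aeval z q) * (x : C) = q.sum fun n b => b • (z ^ n * (x : C)) := by
      rw [aeval_def, eval₂_eq_sum, Polynomial.sum_def, Polynomial.sum_def, Finset.sum_mul]
      refine Finset.sum_congr rfl fun i _ => ?_
      rw [Algebra.smul_def, ← mul_assoc]
    rw [h3, ← h2, h1]
    rfl
  have hpN : algebraMap O C p ∈ N := by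
    refine ⟨algebraMap O (AdjoinRoot h) p, p_mem_Jrad p h, ?_⟩
    rw [AlgHom.toLinearMap_apply, AlgHom.commutes]
  have hz0 : aeval z q * algebraMap O C p = 0 := heval ⟨algebraMap O C p, hpN⟩
  have haez : aeval z q = 0 := by
    calc aeval z q = aeval z q * (algebraMap O C p * ↑pu⁻¹) := by
          rw [← hpu, Units.mul_inv, mul_one]
      _ = (aeval z q * algebraMap O C p) * ↑pu⁻¹ := by ring
      _ = 0 := by rw [hz0, zero_mul]
  have hzint : IsIntegral O z := ⟨q, hqm, by rwa [← aeval_def]⟩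
  obtain ⟨w, hwz⟩ := unit_max h ϑ hϑ bO T hT hu z hzint
  apply hu1
  refine ⟨w, ?_⟩
  apply πmap_inj hd h hh hhdeg ϑ hϑ bC hbC
  rw [map_smul, hwz]
  calc πmap h ϑ hϑ u = ↑pu * z := by
        rw [hzdef, ← mul_assoc, Units.mul_inv, one_mul]
    _ = p • z := by rw [hpu, ← Algebra.smul_def]

include hp hd hh hhdeg hϑ hbC hT in
lemma not_unit_bad (hnu : ¬ IsUnit T.det) : Bad p h := by
  classical
  haveI : Module.Finite O (AdjoinRoot h) := Module.Finite.of_basis (bR h hh hhdeg)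
  haveI : IsNoetherian O (AdjoinRoot h) := isNoetherian_of_isNoetherianRing_of_finite O _
  obtain ⟨pu, hpu⟩ := punitC hp (K := K) (C := C)
  have hdet0 : T.det ≠ 0 := det_ne_zero hd ϑ bC hbC bO T hT
  -- an integral element outside the image of `O[x]/(h)`
  have hz0 : ∃ z : C, IsIntegral O z ∧ ¬∃ w, πmap h ϑ hϑ w = z := by
    by_contra hc
    push_neg at hc
    refine hnu (max_unit hd h hh hhdeg ϑ hϑ bC hbC bO T hT fun z hz => ?_)
    obtain ⟨w, hw⟩ := hc z hz
    exact ⟨w, hw⟩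
  obtain ⟨z₀, hz0int, hz0nr⟩ := hz0
  obtain ⟨n, uu, huu⟩ := IsDiscreteValuationRing.eq_unit_mul_pow_irreducible hdet0 hp
  -- `p^n` kills `B/R`
  have hpn : ∀ z : C, IsIntegral O z → ∃ w, πmap h ϑ hϑ w = (p ^ n) • z := by
    intro z hz
    have h1 : ∀ m, ∃ w, πmap h ϑ hϑ w = (p ^ n) • (bO m : C) := by
      intro m
      obtain ⟨w, hw⟩ := det_smul_mem h ϑ hϑ bO T hT m
      refine ⟨((uu⁻¹ : Oˣ) : O) • w, ?_⟩
      rw [map_smul, hw, huu, smul_smul, ← mul_assoc, Units.inv_mul, one_mul]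
    choose w hw using h1
    refine ⟨∑ m, bO.repr ⟨z, hz⟩ m • w m, ?_⟩
    rw [map_sum]
    conv_rhs => rw [intcl_repr bO z hz]
    rw [Finset.smul_sum]
    refine Finset.sum_congr rfl fun m _ => ?_
    rw [map_smul, hw m, smul_comm]
  -- minimal power of `p` moving `z₀` into the image
  have hex : ∃ m : ℕ, ∃ w, πmap h ϑ hϑ w = (p ^ m) • z₀ := ⟨n, hpn z₀ hz0int⟩
  have hm₀pos : 0 < Nat.find hex := by
    rcases Nat.eq_zero_or_pos (Nat.find hex) with h0 | h0
    · exfalso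
      have hsp := Nat.find_spec hex
      rw [h0, pow_zero, one_smul] at hsp
      exact hz0nr hsp
    · exact h0
  set z₁ : C := (p ^ (Nat.find hex - 1)) • z₀ with hz₁
  have hz₁int : IsIntegral O z₁ := by
    rw [hz₁, Algebra.smul_def]
    exact isIntegral_algebraMap.mul hz0int
  have hz₁nr : ¬∃ w, πmap h ϑ hϑ w = z₁ := by
    intro hw
    exact Nat.find_min hex (show Nat.find hex - 1 < Nat.find hex by omega) hw
  have hpz₁ : ∃ w, πmap h ϑ hϑ w = p • z₁ := by
    obtain ⟨w, hw⟩ := Nat.find_spec hex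
    refine ⟨w, ?_⟩
    rw [hw, hz₁, smul_smul, ← pow_succ']
    congr 2
    omega
  -- a power of the radical is contained in (p)
  have hJfg : (Jrad p h).FG := IsNoetherian.noetherian _
  obtain ⟨NN, hNN⟩ :=
    Ideal.exists_radical_pow_le_of_fg (Ideal.span {algebraMap O (AdjoinRoot h) p}) hJfg
  -- minimal t with J^t · z₁ inside the image
  have hRN : ∃ t, ∀ j ∈ (Jrad p h) ^ t, ∃ w, πmap h ϑ hϑ w = πmap h ϑ hϑ j * z₁ := by
    refine ⟨NN, fun j hj => ?_⟩
    have hjp : j ∈ Ideal.span {algebraMap O (AdjoinRoot h) p} := hNN hj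
    rw [Ideal.mem_span_singleton'] at hjp
    obtain ⟨r, hr⟩ := hjp
    obtain ⟨w₁, hw₁⟩ := hpz₁
    refine ⟨r * w₁, ?_⟩
    rw [map_mul, hw₁, ← hr, map_mul, AlgHom.commutes, Algebra.smul_def]
    ring
  have ht₀pos : 0 < Nat.find hRN := by
    rcases Nat.eq_zero_or_pos (Nat.find hRN) with h0 | h0
    · exfalso
      have hsp := Nat.find_spec hRN
      rw [h0, pow_zero] at hsp
      obtain ⟨w, hw⟩ := hsp 1 (by simp [Ideal.one_eq_top])
      rw [map_one, one_mul] at hw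
      exact hz₁nr ⟨w, hw⟩
    · exact h0
  have hmin := Nat.find_min hRN (show Nat.find hRN - 1 < Nat.find hRN by omega)
  push_neg at hmin
  obtain ⟨js, hjs, hxnr⟩ := hmin
  -- x = π(js) · z₁ is integral, not in the image, and x·J lands in the image
  have hxint : IsIntegral O (πmap h ϑ hϑ js * z₁) :=
    (range_isIntegral h hh hhdeg ϑ hϑ js).mul hz₁int
  have hpowsplit : (Jrad p h) ^ Nat.find hRN = (Jrad p h) ^ (Nat.find hRN - 1) * Jrad p h := by
    rw [← pow_succ]
    congr 1
    omega
  have hxJ : ∀ j ∈ Jrad p h, ∃ w, πmap h ϑ hϑ w = (πmap h ϑ hϑ js * z₁) * πmap h ϑ hϑ j := by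
    intro j hj
    have hmem : js * j ∈ (Jrad p h) ^ Nat.find hRN := by
      rw [hpowsplit]
      exact Ideal.mul_mem_mul hjs hj
    obtain ⟨w, hw⟩ := Nat.find_spec hRN (js * j) hmem
    refine ⟨w, ?_⟩
    rw [hw, map_mul]
    ring
  have hpx : ∃ w, πmap h ϑ hϑ w = p • (πmap h ϑ hϑ js * z₁) := by
    have hmem : js * algebraMap O (AdjoinRoot h) p ∈ (Jrad p h) ^ Nat.find hRN := by
      rw [hpowsplit]
      exact Ideal.mul_mem_mul hjs (p_mem_Jrad p h)
    obtain ⟨w, hw⟩ := Nat.find_spec hRN _ hmem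
    refine ⟨w, ?_⟩
    rw [hw, map_mul, AlgHom.commutes, Algebra.smul_def]
    ring
  obtain ⟨u, hu⟩ := hpx
  refine ⟨u, ?_, ?_⟩
  · rintro ⟨w, hwu⟩
    refine hxnr w (smul_cancelC hp (K := K) _ _ ?_)
    rw [← map_smul, ← hwu]
    exact hu
  · intro j hj
    obtain ⟨wj, hwj⟩ := hxJ j hj
    have he2 : u * j = p • wj := by
      apply πmap_inj hd h hh hhdeg ϑ hϑ bC hbC
      rw [map_mul, hu, map_smul, hwj, smul_mul_assoc]
    refine ⟨wj, ?_, he2⟩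
    -- wj lies in the radical
    obtain ⟨k, hk⟩ := Ideal.mem_radical_iff.mp hj
    rw [Ideal.mem_span_singleton'] at hk
    obtain ⟨s, hs⟩ := hk
    refine Ideal.mem_radical_iff.mpr ⟨k * (n + 1), ?_⟩
    rw [Ideal.mem_span_singleton']
    have hXint : IsIntegral O ((πmap h ϑ hϑ js * z₁) ^ (k * (n + 1))
        * πmap h ϑ hϑ (s ^ (n + 1))) :=
      (hxint.pow _).mul (range_isIntegral h hh hhdeg ϑ hϑ _)
    obtain ⟨w', hw'⟩ := hpn _ hXint
    refine ⟨w', ?_⟩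
    apply πmap_inj hd h hh hhdeg ϑ hϑ bC hbC
    have hπwj : πmap h ϑ hϑ wj = (πmap h ϑ hϑ js * z₁) * πmap h ϑ hϑ j := hwj
    have hjM : πmap h ϑ hϑ (j ^ (k * (n + 1)))
        = (p ^ (n + 1)) • πmap h ϑ hϑ (s ^ (n + 1)) := by
      have hsp : (j ^ k) ^ (n + 1) = s ^ (n + 1) * (algebraMap O (AdjoinRoot h) p) ^ (n + 1) := by
        rw [← mul_pow, hs]
      rw [pow_mul, hsp, map_mul, map_pow (πmap h ϑ hϑ) (algebraMap O (AdjoinRoot h) p),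
        AlgHom.commutes, Algebra.smul_def, map_pow (algebraMap O C) p]
      ring
    have hRHS : πmap h ϑ hϑ (wj ^ (k * (n + 1)))
        = (πmap h ϑ hϑ js * z₁) ^ (k * (n + 1))
          * ((p ^ (n + 1)) • πmap h ϑ hϑ (s ^ (n + 1))) := by
      rw [map_pow (πmap h ϑ hϑ) wj, hπwj,
        mul_pow (πmap h ϑ hϑ js * z₁) (πmap h ϑ hϑ j), ← map_pow (πmap h ϑ hϑ) j, hjM]
    rw [map_mul, hw', AlgHom.commutes, hRHS, Algebra.smul_def, Algebra.smul_def,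
      map_pow (algebraMap O C) p, map_pow (algebraMap O C) p]
    ring

end Side
end St16

namespace St16

lemma val_zero_iff {O : Type*} [CommRing O] [IsDomain O] [IsDiscreteValuationRing O]
    {p : O} (hp : Irreducible p) {v : O → ℕ} (hv : IsAdicVal p v) {x : O} (hx : x ≠ 0) :
    v x = 0 ↔ IsUnit x := by
  obtain ⟨h1, h2⟩ := hv x hx
  constructor
  · intro h0
    rw [h0, zero_add, pow_one] at h2
    by_contra hnu
    refine h2 ?_
    have hm : x ∈ IsLocalRing.maximalIdeal O := by
      rw [IsLocalRing.mem_maximalIdeal]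
      exact hnu
    rw [hp.maximalIdeal_eq] at hm
    exact Ideal.mem_span_singleton.mp hm
  · intro hu
    by_contra h0
    have : p ∣ x := dvd_trans (dvd_pow_self p h0) h1
    exact hp.not_isUnit (isUnit_of_dvd_unit this hu)

end St16

/-- if `f, g ∈ O_p[x]` are monic separable of degree `d` with
`g ≡ f mod p²`, then `ind_p(f) = 0` iff `ind_p(g) = 0`: whether `p` divides the
index of `f` depends only on `f` modulo `p²`. -/
theorem statement16
    -- `O_p` : a complete discrete valuation ring with prime element `p`
    (O : Type*) [CommRing O] [IsDomain O] [IsDiscreteValuationRing O]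
    [IsAdicComplete (IsLocalRing.maximalIdeal O) O]
    (p : O) (hp : Irreducible p)
    (v : O → ℕ) (hv : IsAdicVal p v)
    -- `K_p`, the fraction field of `O_p`
    (K : Type*) [Field K] [Algebra O K] [IsFractionRing O K]
    -- `f` and `g`, monic and separable, of degree `d`
    (f g : Polynomial O) (d : ℕ) (hd : 0 < d)
    (hf : f.Monic) (hfdeg : f.natDegree = d)
    (hfsep : (f.map (algebraMap O K)).Separable)
    (hg : g.Monic) (hgdeg : g.natDegree = d)
    (hgsep : (g.map (algebraMap O K)).Separable)
    -- `g ≡ f mod p²`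
    (hcong : ∀ k, p ^ 2 ∣ (g - f).coeff k)
    -- `ind_p(f) = v_p(det Tf)`, where `Tf` expresses the power basis
    -- `(1, ϑf, …, ϑf^{d−1})` of `Cf = K_p[x]/(f)` in an `O_p`-basis of the integral
    -- closure of `O_p` in `Cf`
    (Cf : Type*) [CommRing Cf] [Algebra K Cf] [Algebra O Cf] [IsScalarTower O K Cf]
    (ϑf : Cf) (hϑf : aeval ϑf (f.map (algebraMap O K)) = 0)
    (bCf : Module.Basis (Fin d) K Cf) (hbCf : ∀ k : Fin d, bCf k = ϑf ^ (k : ℕ))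
    (bOf : Module.Basis (Fin d) O ↥(integralClosure O Cf))
    (Tf : Matrix (Fin d) (Fin d) O)
    (hTf : ∀ k : Fin d, ϑf ^ (k : ℕ) = ∑ l, algebraMap O Cf (Tf l k) * (bOf l : Cf))
    -- `ind_p(g) = v_p(det Tg)`, defined in the same way
    (Cg : Type*) [CommRing Cg] [Algebra K Cg] [Algebra O Cg] [IsScalarTower O K Cg]
    (ϑg : Cg) (hϑg : aeval ϑg (g.map (algebraMap O K)) = 0)
    (bCg : Module.Basis (Fin d) K Cg) (hbCg : ∀ k : Fin d, bCg k = ϑg ^ (k : ℕ))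
    (bOg : Module.Basis (Fin d) O ↥(integralClosure O Cg))
    (Tg : Matrix (Fin d) (Fin d) O)
    (hTg : ∀ k : Fin d, ϑg ^ (k : ℕ) = ∑ l, algebraMap O Cg (Tg l k) * (bOg l : Cg)) :
    -- conclusion : `ind_p(f) = 0 ↔ ind_p(g) = 0`
    (v Tf.det = 0 ↔ v Tg.det = 0) := by
  have hcong' : ∀ k, p ^ 2 ∣ (f - g).coeff k := by
    intro k
    have he : (f - g).coeff k = -((g - f).coeff k) := by rw [← coeff_neg, neg_sub]
    rw [he]
    exact (hcong k).neg_right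
  have hdf : Tf.det ≠ 0 := St16.det_ne_zero hd ϑf bCf hbCf bOf Tf hTf
  have hdg : Tg.det ≠ 0 := St16.det_ne_zero hd ϑg bCg hbCg bOg Tg hTg
  rw [St16.val_zero_iff hp hv hdf, St16.val_zero_iff hp hv hdg]
  constructor
  · intro huf
    by_contra hng
    exact St16.unit_not_bad hp hd f hf hfdeg ϑf hϑf bCf hbCf bOf Tf hTf huf
      (St16.bad_transfer hd f g hf hfdeg hg hgdeg hcong
        (St16.not_unit_bad hp hd g hg hgdeg ϑg hϑg bCg hbCg bOg Tg hTg hng))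
  · intro hug
    by_contra hnf
    exact St16.unit_not_bad hp hd g hg hgdeg ϑg hϑg bCg hbCg bOg Tg hTg hug
      (St16.bad_transfer hd g f hg hgdeg hf hfdeg hcong'
        (St16.not_unit_bad hp hd f hf hfdeg ϑf hϑf bCf hbCf bOf Tf hTf hnf))
end
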